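/- arXiv:2004.06285 — 8 statements merged into one kernel-verified Lean document; each statement's English description precedes it below -/
import Mathlib

section
/- Let G be a nontrivial connected simple graph of order n with rvd(G) = k, and let V_1, V_2, …, V_k be the color classes of a rainbow vertex-disconnection coloring of G that uses exactly k colors. Then for every i ∈ {1,…,k} with |V_i| ≥ 2, the sum of the degrees in G of the vertices of V_i is at most n + C(|V_i|, 2), where C(m,2) = m(m−1)/2. -/
open SimpleGraph

/-- The graph obtained from `G` by removing (isolating) the vertices of `S`.
Since in our uses the endpoints of interest never lie in `S`, reachability
between them in this graph agrees with reachability in `G - S`. -/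
def SimpleGraph.delVerts {V : Type*} (G : SimpleGraph V) (S : Set V) : SimpleGraph V where
  Adj u v := G.Adj u v ∧ u ∉ S ∧ v ∉ S
  symm := ⟨fun u v h => ⟨h.1.symm, h.2.2, h.2.1⟩⟩
  loopless := ⟨fun v h => G.loopless.irrefl v h.1⟩

/-- `c` is a rainbow vertex-disconnection coloring of `G`: every two distinct
vertices `x, y` admit an `x`-`y` rainbow vertex-cut. -/
def SimpleGraph.IsRVDColoring {V α : Type*} (G : SimpleGraph V) (c : V → α) : Prop :=
  ∀ x y : V, x ≠ y → ∃ S : Set V, x ∉ S ∧ y ∉ S ∧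
    (¬ G.Adj x y → ¬ (G.delVerts S).Reachable x y ∧ Set.InjOn c S) ∧
    (G.Adj x y → ¬ ((G.deleteEdges {s(x, y)}).delVerts S).Reachable x y ∧
      (Set.InjOn c (S ∪ {x}) ∨ Set.InjOn c (S ∪ {y})))

/-- The rainbow vertex-disconnection number of `G`: the minimum number of colors
in a rainbow vertex-disconnection coloring of `G`. -/
noncomputable def SimpleGraph.rvd {V : Type*} (G : SimpleGraph V) : ℕ :=
  sInf {k | ∃ c : V → Fin k, G.IsRVDColoring c}

lemma rvd_common_neighbor_unique {V α : Type*} {G : SimpleGraph V} {c : V → α}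
    (hc : G.IsRVDColoring c) {x y : V} (hxy : x ≠ y) (hcol : c x = c y)
    {w1 w2 : V} (h1x : G.Adj w1 x) (h1y : G.Adj w1 y) (h2x : G.Adj w2 x)
    (h2y : G.Adj w2 y) : w1 = w2 := by
  by_contra hne
  obtain ⟨S, hw1, hw2, hnonadj, hadj⟩ := hc w1 w2 hne
  have hxw1 : x ≠ w1 := h1x.ne'
  have hxw2 : x ≠ w2 := h2x.ne'
  have hyw1 : y ≠ w1 := h1y.ne'
  have hyw2 : y ≠ w2 := h2y.ne'
  by_cases hA : G.Adj w1 w2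
  · obtain ⟨hreach, hinj⟩ := hadj hA
    have hx : x ∈ S := by
      by_contra hxS
      exact hreach ((SimpleGraph.Adj.reachable
        (⟨SimpleGraph.deleteEdges_adj.mpr ⟨h1x, by simp only [Set.mem_singleton_iff, Sym2.eq_iff]; tauto⟩, hw1, hxS⟩ :
          ((G.deleteEdges {s(w1, w2)}).delVerts S).Adj w1 x)).trans
        (SimpleGraph.Adj.reachable
        (⟨SimpleGraph.deleteEdges_adj.mpr ⟨h2x.symm, by simp only [Set.mem_singleton_iff, Sym2.eq_iff]; tauto⟩, hxS, hw2⟩ :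
          ((G.deleteEdges {s(w1, w2)}).delVerts S).Adj x w2)))
    have hy : y ∈ S := by
      by_contra hyS
      exact hreach ((SimpleGraph.Adj.reachable
        (⟨SimpleGraph.deleteEdges_adj.mpr ⟨h1y, by simp only [Set.mem_singleton_iff, Sym2.eq_iff]; tauto⟩, hw1, hyS⟩ :
          ((G.deleteEdges {s(w1, w2)}).delVerts S).Adj w1 y)).trans
        (SimpleGraph.Adj.reachable
        (⟨SimpleGraph.deleteEdges_adj.mpr ⟨h2y.symm, by simp only [Set.mem_singleton_iff, Sym2.eq_iff]; tauto⟩, hyS, hw2⟩ :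
          ((G.deleteEdges {s(w1, w2)}).delVerts S).Adj y w2)))
    rcases hinj with hinj | hinj
    · exact hxy (hinj (Set.mem_union_left _ hx) (Set.mem_union_left _ hy) hcol)
    · exact hxy (hinj (Set.mem_union_left _ hx) (Set.mem_union_left _ hy) hcol)
  · obtain ⟨hreach, hinj⟩ := hnonadj hA
    have hx : x ∈ S := by
      by_contra hxS
      exact hreach ((SimpleGraph.Adj.reachable
        (⟨h1x, hw1, hxS⟩ : (G.delVerts S).Adj w1 x)).trans
        (SimpleGraph.Adj.reachable (⟨h2x.symm, hxS, hw2⟩ : (G.delVerts S).Adj x w2)))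
    have hy : y ∈ S := by
      by_contra hyS
      exact hreach ((SimpleGraph.Adj.reachable
        (⟨h1y, hw1, hyS⟩ : (G.delVerts S).Adj w1 y)).trans
        (SimpleGraph.Adj.reachable (⟨h2y.symm, hyS, hw2⟩ : (G.delVerts S).Adj y w2)))
    exact hxy (hinj hx hy hcol)


lemma le_one_add_choose_two (m : ℕ) : m ≤ 1 + m.choose 2 := by
  induction m with
  | zero => simp
  | succ n ih =>
    rw [Nat.choose_succ_succ, Nat.choose_one_right]
    omega

theorem sum_degree_colorClass_le' {V : Type*} [Fintype V] [DecidableEq V]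
    (G : SimpleGraph V) [DecidableRel G.Adj] {k : ℕ}
    (c : V → Fin k) (hc : G.IsRVDColoring c) (i : Fin k) :
    ∑ v ∈ Finset.univ.filter (fun v => c v = i), G.degree v ≤
      Fintype.card V + ((Finset.univ.filter fun v => c v = i).card).choose 2 := by
  classical
  set T := Finset.univ.filter (fun v => c v = i) with hT
  have hTmem : ∀ v, v ∈ T ↔ c v = i := by intro v; simp [hT]
  have hdeg : ∀ v, G.degree v = ∑ u : V, if G.Adj v u then 1 else 0 := by
    intro v
    rw [← SimpleGraph.card_neighborFinset_eq_degree, SimpleGraph.neighborFinset_eq_filter,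
      Finset.card_filter]
  have hswap : ∑ v ∈ T, G.degree v =
      ∑ u : V, (T.filter (fun v => G.Adj v u)).card := by
    calc ∑ v ∈ T, G.degree v = ∑ v ∈ T, ∑ u : V, if G.Adj v u then 1 else 0 := by
          simp_rw [hdeg]
      _ = ∑ u : V, ∑ v ∈ T, if G.Adj v u then 1 else 0 := Finset.sum_comm
      _ = ∑ u : V, (T.filter (fun v => G.Adj v u)).card := by
          refine Finset.sum_congr rfl fun u _ => ?_
          rw [Finset.card_filter]
  rw [hswap]
  have hstep : ∑ u : V, (T.filter (fun v => G.Adj v u)).card ≤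
      Fintype.card V +
        ∑ u : V, ((T.filter (fun v => G.Adj v u)).powersetCard 2).card := by
    calc ∑ u : V, (T.filter (fun v => G.Adj v u)).card
        ≤ ∑ u : V, (1 + ((T.filter (fun v => G.Adj v u)).card).choose 2) :=
          Finset.sum_le_sum fun u _ => le_one_add_choose_two _
      _ = Fintype.card V +
          ∑ u : V, ((T.filter (fun v => G.Adj v u)).powersetCard 2).card := by
          rw [Finset.sum_add_distrib, Finset.sum_const, smul_eq_mul, mul_one,
            Finset.card_univ]
          congr 1
          exact Finset.sum_congr rfl fun u _ => (Finset.card_powersetCard 2 _).symm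
  refine hstep.trans (Nat.add_le_add_left ?_ _)
  have hdisj : ∀ u ∈ (Finset.univ : Finset V), ∀ u' ∈ (Finset.univ : Finset V),
      u ≠ u' → Disjoint ((T.filter (fun v => G.Adj v u)).powersetCard 2)
        ((T.filter (fun v => G.Adj v u')).powersetCard 2) := by
    intro u _ u' _ huu'
    rw [Finset.disjoint_left]
    intro p hpu hpu'
    exfalso
    rw [Finset.mem_powersetCard] at hpu hpu'
    obtain ⟨x, y, hxy, hpeq⟩ := Finset.card_eq_two.mp hpu.2
    have hxu := hpu.1 (by simp [hpeq] : x ∈ p)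
    have hyu := hpu.1 (by simp [hpeq] : y ∈ p)
    have hxu' := hpu'.1 (by simp [hpeq] : x ∈ p)
    have hyu' := hpu'.1 (by simp [hpeq] : y ∈ p)
    simp only [Finset.mem_filter, hTmem] at hxu hyu hxu' hyu'
    exact huu' (rvd_common_neighbor_unique hc hxy (hxu.1.trans hyu.1.symm)
      hxu.2.symm hyu.2.symm hxu'.2.symm hyu'.2.symm)
  calc ∑ u : V, ((T.filter (fun v => G.Adj v u)).powersetCard 2).card
      = ((Finset.univ : Finset V).biUnion
          (fun u => (T.filter (fun v => G.Adj v u)).powersetCard 2)).card :=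
        (Finset.card_biUnion hdisj).symm
    _ ≤ (T.powersetCard 2).card := by
        apply Finset.card_le_card
        intro p hp
        rw [Finset.mem_biUnion] at hp
        obtain ⟨u, _, hpu⟩ := hp
        exact Finset.powersetCard_mono (Finset.filter_subset _ _) hpu
    _ = T.card.choose 2 := Finset.card_powersetCard 2 _

/-- Let `G` be a nontrivial connected graph of order `n` with `rvd(G) = k`, and
let the `V i` be the color classes of a rainbow vertex-disconnection coloring of
`G` using exactly `k` colors. Then every color class of size at least `2` has
degree sum at most `n + C(|V i|, 2)`. -/
theorem sum_degree_colorClass_le {V : Type*} [Fintype V] [DecidableEq V] [Nontrivial V]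
    (G : SimpleGraph V) [DecidableRel G.Adj] (hG : G.Connected) (k : ℕ)
    (hk : G.rvd = k) (c : V → Fin k) (hc : G.IsRVDColoring c)
    (hsurj : Function.Surjective c) (i : Fin k)
    (hi : 2 ≤ (Finset.univ.filter fun v => c v = i).card) :
    ∑ v ∈ Finset.univ.filter (fun v => c v = i), G.degree v ≤
      Fintype.card V + ((Finset.univ.filter fun v => c v = i).card).choose 2 :=
  sum_degree_colorClass_le' G c hc i
end

section
/- Let G be a nontrivial connected simple graph of order n with rvd(G) = k, let V_1, V_2, …, V_k be the color classes of a rainbow vertex-disconnection coloring of G that uses exactly k colors, and let S be the union of all singleton color classes, i.e. S = {v : v ∈ V_i for some i with |V_i| = 1}. Then any two distinct vertices u, v ∈ S satisfy d_G(u) + d_G(v) ≤ n + k − 2; consequently, if |S| ≥ 2, then the sum of the degrees in G of the vertices of S is at most ((n+k)/2 − 1)·|S|. -/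
open SimpleGraph

private lemma delVerts_walk_not_mem {V : Type*} {G : SimpleGraph V} {X : Set V} :
    ∀ {u w : V}, (G.delVerts X).Walk u w → u ∉ X → w ∉ X
  | _, _, SimpleGraph.Walk.nil, hu => hu
  | _, _, SimpleGraph.Walk.cons h p, _ => delVerts_walk_not_mem p h.2.2

private lemma key_card_bound {V : Type*} [Fintype V] [DecidableEq V]
    (G' : SimpleGraph V) (X : Set V) (u v : V)
    (hu : u ∉ X) (hv : v ∉ X) (hnr : ¬ (G'.delVerts X).Reachable u v) :
    ((G'.neighborSet u).ncard : ℤ) + (G'.neighborSet v).ncard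
      ≤ (Fintype.card V : ℤ) + X.ncard - 2 := by
  classical
  set Xf := X.toFinset with hXf
  set Cu := Finset.univ.filter (fun w => (G'.delVerts X).Reachable u w) with hCudef
  set Cv := Finset.univ.filter (fun w => (G'.delVerts X).Reachable v w) with hCvdef
  have hmemCu : ∀ w, w ∈ Cu ↔ (G'.delVerts X).Reachable u w := by
    intro w; simp [hCudef]
  have hmemCv : ∀ w, w ∈ Cv ↔ (G'.delVerts X).Reachable v w := by
    intro w; simp [hCvdef]
  have huCu : u ∈ Cu := (hmemCu u).2 (Reachable.refl u)
  have hvCv : v ∈ Cv := (hmemCv v).2 (Reachable.refl v)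
  have hCuX : ∀ w ∈ Cu, w ∉ X := by
    intro w hw
    obtain ⟨p⟩ := (hmemCu w).1 hw
    exact delVerts_walk_not_mem p hu
  have hCvX : ∀ w ∈ Cv, w ∉ X := by
    intro w hw
    obtain ⟨p⟩ := (hmemCv w).1 hw
    exact delVerts_walk_not_mem p hv
  have hdisj : Disjoint Cu Cv := by
    rw [Finset.disjoint_left]
    intro w hwu hwv
    exact hnr (((hmemCu w).1 hwu).trans ((hmemCv w).1 hwv).symm)
  have hdisjX : Disjoint (Cu ∪ Cv) Xf := by
    rw [Finset.disjoint_left]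
    intro w hw hwX
    rcases Finset.mem_union.1 hw with h | h
    · exact hCuX w h (Set.mem_toFinset.1 hwX)
    · exact hCvX w h (Set.mem_toFinset.1 hwX)
  have hcards : Cu.card + Cv.card + Xf.card ≤ Fintype.card V := by
    calc Cu.card + Cv.card + Xf.card
        = (Cu ∪ Cv).card + Xf.card := by rw [Finset.card_union_of_disjoint hdisj]
      _ = ((Cu ∪ Cv) ∪ Xf).card := (Finset.card_union_of_disjoint hdisjX).symm
      _ ≤ Fintype.card V := Finset.card_le_univ _
  have hNsub : ∀ (a : V) (Ca : Finset V),
      (∀ w, w ∈ Ca ↔ (G'.delVerts X).Reachable a w) → a ∉ X →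
      (G'.neighborSet a).toFinset ⊆ (Ca.erase a) ∪ Xf := by
    intro a Ca hmem ha w hw
    have hadj : G'.Adj a w := by simpa using hw
    by_cases hwX : w ∈ X
    · exact Finset.mem_union_right _ (Set.mem_toFinset.2 hwX)
    · refine Finset.mem_union_left _ (Finset.mem_erase.2 ⟨hadj.ne', ?_⟩)
      exact (hmem w).2 (SimpleGraph.Adj.reachable (show (G'.delVerts X).Adj a w from ⟨hadj, ha, hwX⟩))
  have hNu' : (G'.neighborSet u).toFinset.card + 1 ≤ Cu.card + Xf.card := by
    have h1 := Finset.card_le_card (hNsub u Cu hmemCu hu)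
    have h2 := Finset.card_union_le (Cu.erase u) Xf
    have h3 : (Cu.erase u).card = Cu.card - 1 := Finset.card_erase_of_mem huCu
    have h4 : 1 ≤ Cu.card := Finset.card_pos.2 ⟨u, huCu⟩
    omega
  have hNv' : (G'.neighborSet v).toFinset.card + 1 ≤ Cv.card + Xf.card := by
    have h1 := Finset.card_le_card (hNsub v Cv hmemCv hv)
    have h2 := Finset.card_union_le (Cv.erase v) Xf
    have h3 : (Cv.erase v).card = Cv.card - 1 := Finset.card_erase_of_mem hvCv
    have h4 : 1 ≤ Cv.card := Finset.card_pos.2 ⟨v, hvCv⟩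
    omega
  have e1 : (G'.neighborSet u).ncard = (G'.neighborSet u).toFinset.card :=
    Set.ncard_eq_toFinset_card' _
  have e2 : (G'.neighborSet v).ncard = (G'.neighborSet v).toFinset.card :=
    Set.ncard_eq_toFinset_card' _
  have e3 : X.ncard = Xf.card := Set.ncard_eq_toFinset_card' _
  rw [e1, e2, e3]
  omega

/-- Let `G` be a nontrivial connected graph of order `n` with `rvd(G) = k`, let
the color classes of a rainbow vertex-disconnection coloring with exactly `k`
colors be given, and let `S` be the union of the singleton color classes. Then
any two distinct vertices `u, v ∈ S` satisfy `d(u) + d(v) ≤ n + k - 2`, and if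
`|S| ≥ 2` then `∑_{v ∈ S} d(v) ≤ ((n+k)/2 - 1)·|S|`. -/
theorem sum_degree_singletonClasses_le {V : Type*} [Fintype V] [DecidableEq V] [Nontrivial V]
    (G : SimpleGraph V) [DecidableRel G.Adj] (hG : G.Connected) (k : ℕ)
    (hk : G.rvd = k) (c : V → Fin k) (hc : G.IsRVDColoring c)
    (hsurj : Function.Surjective c)
    (S : Finset V)
    (hS : S = Finset.univ.filter fun v => (Finset.univ.filter fun w => c w = c v).card = 1) :
    (∀ u ∈ S, ∀ v ∈ S, u ≠ v →
        (G.degree u : ℤ) + G.degree v ≤ (Fintype.card V : ℤ) + k - 2) ∧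
      (2 ≤ S.card →
        (∑ v ∈ S, (G.degree v : ℝ)) ≤
          (((Fintype.card V : ℝ) + k) / 2 - 1) * S.card) := by
  classical
  have hdeg : ∀ w : V, (G.neighborSet w).ncard = G.degree w := by
    intro w
    rw [Set.ncard_eq_toFinset_card']
    simp [SimpleGraph.degree, SimpleGraph.neighborFinset]
  have huniq : ∀ u ∈ S, ∀ w : V, c w = c u → w = u := by
    intro u huS w hw
    rw [hS, Finset.mem_filter] at huS
    obtain ⟨a, ha⟩ := Finset.card_eq_one.1 huS.2
    have h1 : u ∈ ({a} : Finset V) := ha ▸ Finset.mem_filter.2 ⟨Finset.mem_univ u, rfl⟩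
    have h2 : w ∈ ({a} : Finset V) := ha ▸ Finset.mem_filter.2 ⟨Finset.mem_univ w, hw⟩
    rw [Finset.mem_singleton.1 h2, Finset.mem_singleton.1 h1]
  have main : ∀ u ∈ S, ∀ v ∈ S, u ≠ v →
      (G.degree u : ℤ) + G.degree v ≤ (Fintype.card V : ℤ) + k - 2 := by
    intro u huS v hvS huv
    have hcne : c u ≠ c v := fun h => huv (huniq v hvS u h)
    obtain ⟨X, hXu, hXv, hna, hadj⟩ := hc u v huv
    by_cases hA : G.Adj u v
    · obtain ⟨hnr, hinj⟩ := hadj hA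
      have hXcu : ∀ w ∈ X, c w ≠ c u := by
        intro w hw h
        exact hXu ((huniq u huS w h) ▸ hw)
      have hXcv : ∀ w ∈ X, c w ≠ c v := by
        intro w hw h
        exact hXv ((huniq v hvS w h) ▸ hw)
      have hinjX : Set.InjOn c X := by
        rcases hinj with h | h
        · exact h.mono Set.subset_union_left
        · exact h.mono Set.subset_union_left
      have hk2 : 2 ≤ k := by
        have h2 : 1 < Fintype.card (Fin k) :=
          Fintype.one_lt_card_iff_nontrivial.2 ⟨⟨c u, c v, hcne⟩⟩
        simpa using Nat.succ_le_of_lt (by simpa using h2 : 1 < k)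
      have hXcard : (X.ncard : ℤ) ≤ (k : ℤ) - 2 := by
        have himg : X.toFinset.image c ⊆ (Finset.univ.erase (c u)).erase (c v) := by
          intro a ha
          obtain ⟨w, hw, rfl⟩ := Finset.mem_image.1 ha
          have hwX : w ∈ X := Set.mem_toFinset.1 hw
          exact Finset.mem_erase.2 ⟨hXcv w hwX, Finset.mem_erase.2 ⟨hXcu w hwX, Finset.mem_univ _⟩⟩
        have h1 : (X.toFinset.image c).card = X.toFinset.card :=
          Finset.card_image_of_injOn (by simpa using hinjX)
        have h2 := Finset.card_le_card himg
        have h3 : ((Finset.univ.erase (c u)).erase (c v)).card = k - 2 := by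
          rw [Finset.card_erase_of_mem (Finset.mem_erase.2 ⟨hcne.symm, Finset.mem_univ _⟩),
            Finset.card_erase_of_mem (Finset.mem_univ _)]
          simp only [Finset.card_univ, Fintype.card_fin]
          omega
        rw [Set.ncard_eq_toFinset_card']
        omega
      set G' := G.deleteEdges {s(u, v)} with hG'
      have hNu : G'.neighborSet u = G.neighborSet u \ {v} := by
        ext w
        simp only [SimpleGraph.mem_neighborSet, hG', SimpleGraph.deleteEdges_adj,
          Set.mem_diff, Set.mem_singleton_iff, Set.mem_singleton_iff]
        constructor
        · rintro ⟨h1, h2⟩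
          exact ⟨h1, fun h => h2 (by rw [h])⟩
        · rintro ⟨h1, h2⟩
          exact ⟨h1, fun h => h2 (Sym2.congr_right.1 h)⟩
      have hNv : G'.neighborSet v = G.neighborSet v \ {u} := by
        ext w
        simp only [SimpleGraph.mem_neighborSet, hG', SimpleGraph.deleteEdges_adj,
          Set.mem_diff, Set.mem_singleton_iff]
        have hsym : s(v, w) = s(u, v) ↔ w = u := by
          constructor
          · intro h
            rcases Sym2.eq_iff.1 h with ⟨h1, _⟩ | ⟨_, h2⟩
            · exact absurd h1 (Ne.symm huv)
            · exact h2
          · intro h; rw [h, Sym2.eq_swap]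
        constructor
        · rintro ⟨h1, h2⟩
          exact ⟨h1, fun h => h2 (hsym.2 h)⟩
        · rintro ⟨h1, h2⟩
          exact ⟨h1, fun h => h2 (hsym.1 h)⟩
      have hvmem : v ∈ G.neighborSet u := hA
      have humem : u ∈ G.neighborSet v := hA.symm
      have hAu : (G'.neighborSet u).ncard + 1 = G.degree u := by
        rw [hNu, Set.ncard_diff_singleton_add_one hvmem (Set.toFinite _), hdeg]
      have hAv : (G'.neighborSet v).ncard + 1 = G.degree v := by
        rw [hNv, Set.ncard_diff_singleton_add_one humem (Set.toFinite _), hdeg]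
      have hkey := key_card_bound G' X u v hXu hXv hnr
      omega
    · obtain ⟨hnr, hinjX⟩ := hna hA
      have hXcard : (X.ncard : ℤ) ≤ (k : ℤ) := by
        have h1 : (X.toFinset.image c).card = X.toFinset.card :=
          Finset.card_image_of_injOn (by simpa using hinjX)
        have h2 : (X.toFinset.image c).card ≤ k := by
          simpa using Finset.card_le_univ (X.toFinset.image c)
        rw [Set.ncard_eq_toFinset_card']
        omega
      have hkey := key_card_bound G X u v hXu hXv hnr
      rw [hdeg, hdeg] at hkey
      omega
  refine ⟨main, ?_⟩
  intro hm
  set n := Fintype.card V with hn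
  set m := S.card with hmdef
  set D := ∑ v ∈ S, (G.degree v : ℝ) with hD
  have hB : ∀ u ∈ S, ∀ v ∈ S, u ≠ v →
      (G.degree u : ℝ) + G.degree v ≤ (n : ℝ) + k - 2 := by
    intro u hu v hv huv
    exact_mod_cast main u hu v hv huv
  have hm1 : 1 ≤ m := le_trans (by norm_num) hm
  have hdouble : ∑ u ∈ S, ∑ v ∈ S.erase u, ((G.degree u : ℝ) + G.degree v)
      = 2 * ((m : ℝ) - 1) * D := by
    have hinner : ∀ u ∈ S, ∑ v ∈ S.erase u, ((G.degree u : ℝ) + G.degree v)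
        = ((m : ℝ) - 1) * G.degree u + (D - G.degree u) := by
      intro u hu
      rw [Finset.sum_add_distrib, Finset.sum_const, Finset.card_erase_of_mem hu,
        Finset.sum_erase_eq_sub hu, nsmul_eq_mul, Nat.cast_sub hm1]
      norm_num [hD]
    rw [Finset.sum_congr rfl hinner, Finset.sum_add_distrib, Finset.sum_sub_distrib,
      ← Finset.mul_sum, Finset.sum_const, nsmul_eq_mul, ← hD, ← hmdef]
    ring
  have hbound : ∑ u ∈ S, ∑ v ∈ S.erase u, ((G.degree u : ℝ) + G.degree v)
      ≤ (m : ℝ) * (((m : ℝ) - 1) * ((n : ℝ) + k - 2)) := by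
    have hstep : ∀ u ∈ S, ∑ v ∈ S.erase u, ((G.degree u : ℝ) + G.degree v)
        ≤ ((m : ℝ) - 1) * ((n : ℝ) + k - 2) := by
      intro u hu
      have := Finset.sum_le_card_nsmul (S.erase u)
        (fun v => (G.degree u : ℝ) + G.degree v) ((n : ℝ) + k - 2)
        (fun v hv => hB u hu v (Finset.mem_of_mem_erase hv)
          (Ne.symm (Finset.mem_erase.1 hv).1))
      rwa [Finset.card_erase_of_mem hu, nsmul_eq_mul, Nat.cast_sub hm1, Nat.cast_one] at this
    calc ∑ u ∈ S, ∑ v ∈ S.erase u, ((G.degree u : ℝ) + G.degree v)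
        ≤ ∑ _u ∈ S, ((m : ℝ) - 1) * ((n : ℝ) + k - 2) := Finset.sum_le_sum hstep
      _ = (m : ℝ) * (((m : ℝ) - 1) * ((n : ℝ) + k - 2)) := by
          rw [Finset.sum_const, nsmul_eq_mul]
  rw [hdouble] at hbound
  have hm2 : (2 : ℝ) ≤ (m : ℝ) := by exact_mod_cast hm
  have hgoal : D ≤ (((n : ℝ) + k) / 2 - 1) * m := by
    nlinarith [hbound, hm2]
  exact hgoal
end

section
/- Let G be a connected simple graph of order n ≥ 3 with rvd(G) = n−1. Then |E(G)| ≤ n(n−1)/2 − n + 3. -/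
open SimpleGraph

/-- Counting: if the complement of `G` has at most `n - 4` edges, then any two
distinct vertices `u, v` have two distinct common neighbors `x, y` (distinct
from `u, v`) that are adjacent to each other. -/
lemma exists_good_pair {V : Type*} [Fintype V] [DecidableEq V]
    (G : SimpleGraph V) [DecidableRel G.Adj] (u v : V) (huv : u ≠ v)
    (hmc : Gᶜ.edgeFinset.card + 4 ≤ Fintype.card V) :
    ∃ x y : V, x ≠ y ∧ x ≠ u ∧ x ≠ v ∧ y ≠ u ∧ y ≠ v ∧
      G.Adj x u ∧ G.Adj x v ∧ G.Adj y u ∧ G.Adj y v ∧ G.Adj x y := by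
  classical
  by_contra hcon
  push_neg at hcon
  set B : Finset V := Finset.univ.filter
    (fun w => w ≠ u ∧ w ≠ v ∧ (¬ G.Adj w u ∨ ¬ G.Adj w v)) with hB
  set W : Finset V := Finset.univ.filter
    (fun w => w ≠ u ∧ w ≠ v ∧ G.Adj w u ∧ G.Adj w v) with hW
  have hdisj : Disjoint B W := by
    rw [Finset.disjoint_left]
    intro a ha ha'
    simp only [hB, hW, Finset.mem_filter, Finset.mem_univ, true_and] at ha ha'
    tauto
  have hBWcard : B.card + W.card + 2 = Fintype.card V := by
    have hun : B ∪ W = Finset.univ \ {u, v} := by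
      ext w
      by_cases h1 : G.Adj w u <;> by_cases h2 : G.Adj w v <;>
        simp only [hB, hW, Finset.mem_union, Finset.mem_filter, Finset.mem_univ, true_and,
          Finset.mem_sdiff, Finset.mem_insert, Finset.mem_singleton, h1, h2] <;>
        tauto
    have hcu := Finset.card_union_of_disjoint hdisj
    rw [hun, Finset.card_sdiff_of_subset (Finset.subset_univ _), Finset.card_pair huv,
      Finset.card_univ] at hcu
    have h2 : ({u, v} : Finset V).card ≤ Fintype.card V := by
      rw [← Finset.card_univ]; exact Finset.card_le_card (Finset.subset_univ _)
    rw [Finset.card_pair huv] at h2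
    omega
  rcases eq_or_ne W ∅ with hWe | hWne
  · -- no common neighbors at all: already too many complement edges
    set f : V → Sym2 V := fun w => if G.Adj w u then s(w, v) else s(w, u) with hf
    have hmaps : ∀ w ∈ B, f w ∈ Gᶜ.edgeFinset := by
      intro w hw
      simp only [hB, Finset.mem_filter, Finset.mem_univ, true_and] at hw
      obtain ⟨hwu, hwv, hor⟩ := hw
      rw [SimpleGraph.mem_edgeFinset]
      by_cases h1 : G.Adj w u
      · have h2 : ¬ G.Adj w v := by tauto
        simp only [hf, h1, if_pos]
        exact (Gᶜ.mem_edgeSet).2 ((G.compl_adj w v).2 ⟨hwv, h2⟩)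
      · simp only [hf, h1, if_neg, if_false]
        exact (Gᶜ.mem_edgeSet).2 ((G.compl_adj w u).2 ⟨hwu, h1⟩)
    have hinj : Set.InjOn f (B : Set V) := by
      intro a ha b hb hab
      simp only [Finset.coe_filter, Set.mem_setOf_eq, hB, Finset.mem_coe,
        Finset.mem_filter, Finset.mem_univ, true_and] at ha hb
      by_cases h1 : G.Adj a u <;> by_cases h2 : G.Adj b u <;>
        simp only [hf, h1, h2, if_pos, if_neg, if_false, Sym2.eq_iff] at hab <;>
        tauto
    have hcard := Finset.card_le_card_of_injOn f hmaps hinj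
    have hWcard : W.card = 0 := by rw [hWe]; rfl
    omega
  · obtain ⟨w₀, hw₀mem⟩ := Finset.nonempty_iff_ne_empty.2 hWne
    have hw₀ : w₀ ≠ u ∧ w₀ ≠ v ∧ G.Adj w₀ u ∧ G.Adj w₀ v := by
      simpa only [hW, Finset.mem_filter, Finset.mem_univ, true_and] using hw₀mem
    have hnadj : ∀ w ∈ W, w ≠ w₀ → ¬ G.Adj w₀ w := by
      intro w hw hne
      simp only [hW, Finset.mem_filter, Finset.mem_univ, true_and] at hw
      exact hcon w₀ w hne.symm hw₀.1 hw₀.2.1 hw.1 hw.2.1 hw₀.2.2.1 hw₀.2.2.2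
        hw.2.2.1 hw.2.2.2
    set A : Finset V := B ∪ W.erase w₀ with hA
    set f : V → Sym2 V := fun w =>
      if ¬ G.Adj w u then s(w, u) else if ¬ G.Adj w v then s(w, v) else s(w, w₀) with hf
    have hkey : ∀ w ∈ A, (w ≠ u ∧ w ≠ v ∧ w ≠ w₀) ∧
        (f w = s(w, u) ∧ Gᶜ.Adj w u ∨ f w = s(w, v) ∧ Gᶜ.Adj w v ∨
          (f w = s(w, w₀) ∧ Gᶜ.Adj w w₀)) := by
      intro w hw
      rcases Finset.mem_union.1 hw with hwB | hwE
      · have hww₀ : w ≠ w₀ := fun h =>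
          Finset.disjoint_left.1 hdisj hwB (h ▸ hw₀mem)
        simp only [hB, Finset.mem_filter, Finset.mem_univ, true_and] at hwB
        refine ⟨⟨hwB.1, hwB.2.1, hww₀⟩, ?_⟩
        by_cases h1 : G.Adj w u
        · have h2 : ¬ G.Adj w v := by tauto
          exact Or.inr (Or.inl ⟨by simp [hf, h1, h2], (G.compl_adj w v).2 ⟨hwB.2.1, h2⟩⟩)
        · exact Or.inl ⟨by simp [hf, h1], (G.compl_adj w u).2 ⟨hwB.1, h1⟩⟩
      · have hne := Finset.ne_of_mem_erase hwE
        have hwW := Finset.mem_of_mem_erase hwE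
        have hw' := hwW
        simp only [hW, Finset.mem_filter, Finset.mem_univ, true_and] at hw'
        exact ⟨⟨hw'.1, hw'.2.1, hne⟩, Or.inr (Or.inr ⟨by simp [hf, hw'.2.2.1, hw'.2.2.2],
          (G.compl_adj w w₀).2 ⟨hne, fun h => hnadj w hwW hne h.symm⟩⟩)⟩
    have hmaps : ∀ w ∈ A, f w ∈ Gᶜ.edgeFinset := by
      intro w hw
      rw [SimpleGraph.mem_edgeFinset]
      rcases (hkey w hw).2 with ⟨he, ha⟩ | ⟨he, ha⟩ | ⟨he, ha⟩ <;>
        · rw [he]; exact (Gᶜ.mem_edgeSet).2 ha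
    have aux : ∀ {a b za zb : V}, s(a, za) = s(b, zb) → a ≠ za → b ≠ zb →
        a ≠ zb → b ≠ za → a = b := by
      intro a b za zb h h1 h2 h3 h4
      rw [Sym2.eq_iff] at h
      tauto
    have hinj : Set.InjOn f (A : Set V) := by
      intro a ha b hb hab
      obtain ⟨⟨hau, hav, haw⟩, hfa⟩ := hkey a (Finset.mem_coe.1 ha)
      obtain ⟨⟨hbu, hbv, hbw⟩, hfb⟩ := hkey b (Finset.mem_coe.1 hb)
      rcases hfa with ⟨h, -⟩ | ⟨h, -⟩ | ⟨h, -⟩ <;> rcases hfb with ⟨h', -⟩ | ⟨h', -⟩ | ⟨h', -⟩ <;>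
        · rw [h, h'] at hab
          exact aux hab (by assumption) (by assumption) (by assumption) (by assumption)
    have hcard := Finset.card_le_card_of_injOn f hmaps hinj
    have hAcard : A.card = B.card + (W.card - 1) := by
      rw [hA, Finset.card_union_of_disjoint
        (hdisj.mono_right (Finset.erase_subset _ _)), Finset.card_erase_of_mem hw₀mem]
    have hWpos : 1 ≤ W.card := Finset.card_pos.2 ⟨w₀, hw₀mem⟩
    omega

/-- If the complement of `G` has at most `n - 4` edges, then any rainbow
vertex-disconnection coloring of `G` is injective. -/
lemma rvdColoring_injective {V : Type*} [Fintype V] [DecidableEq V]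
    (G : SimpleGraph V) [DecidableRel G.Adj]
    (hmc : Gᶜ.edgeFinset.card + 4 ≤ Fintype.card V)
    {α : Type*} (c : V → α) (hc : G.IsRVDColoring c) : Function.Injective c := by
  intro u v hcuv
  by_contra huv
  obtain ⟨x, y, hxy, hxu, hxv, hyu, hyv, hxuA, hxvA, hyuA, hyvA, hA⟩ :=
    exists_good_pair G u v huv hmc
  obtain ⟨S, hxS, hyS, _, hadj⟩ := hc x y hxy
  obtain ⟨hreach, hrb⟩ := hadj hA
  have hmemS : ∀ w : V, w ≠ x → w ≠ y → G.Adj w x → G.Adj w y → w ∈ S := by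
    intro w hwx hwy hwxA hwyA
    by_contra hwS
    apply hreach
    have h1 : ((G.deleteEdges {s(x, y)}).delVerts S).Adj x w := by
      refine ⟨(SimpleGraph.deleteEdges_adj ..).2 ⟨hwxA.symm, ?_⟩, hxS, hwS⟩
      intro hmem
      rw [Set.mem_singleton_iff, Sym2.eq_iff] at hmem
      tauto
    have h2 : ((G.deleteEdges {s(x, y)}).delVerts S).Adj w y := by
      refine ⟨(SimpleGraph.deleteEdges_adj ..).2 ⟨hwyA, ?_⟩, hwS, hyS⟩
      intro hmem
      rw [Set.mem_singleton_iff, Sym2.eq_iff] at hmem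
      tauto
    exact (h1.reachable).trans h2.reachable
  have huS : u ∈ S := hmemS u hxu.symm hyu.symm hxuA.symm hyuA.symm
  have hvS : v ∈ S := hmemS v hxv.symm hyv.symm hxvA.symm hyvA.symm
  rcases hrb with hinj | hinj
  · exact huv (hinj (Set.mem_union_left _ huS) (Set.mem_union_left _ hvS) hcuv)
  · exact huv (hinj (Set.mem_union_left _ huS) (Set.mem_union_left _ hvS) hcuv)

/-- Let `G` be a connected graph of order `n ≥ 3` with `rvd(G) = n - 1`.
Then `|E(G)| ≤ n(n-1)/2 - n + 3`. -/
theorem edge_card_le_of_rvd_eq_card_sub_one {V : Type*} [Fintype V] [DecidableEq V]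
    (G : SimpleGraph V) [DecidableRel G.Adj] (hG : G.Connected)
    (hn : 3 ≤ Fintype.card V) (hrvd : G.rvd = Fintype.card V - 1) :
    (G.edgeFinset.card : ℤ) ≤
      (Fintype.card V : ℤ) * (Fintype.card V - 1) / 2 - Fintype.card V + 3 := by
  classical
  by_contra hle
  push_neg at hle
  -- count edges of the complement
  have hsum : G.edgeFinset.card + Gᶜ.edgeFinset.card = (Fintype.card V).choose 2 := by
    calc G.edgeFinset.card + Gᶜ.edgeFinset.card
        = (G ⊔ Gᶜ).edgeFinset.card := by
          rw [edgeFinset_sup, Finset.card_union_of_disjoint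
            (disjoint_edgeFinset.2 (isCompl_compl (x := G)).disjoint)]
      _ = (⊤ : SimpleGraph V).edgeFinset.card := by
          congr 1
          exact Set.toFinset_congr (by rw [sup_compl_eq_top])
      _ = (Fintype.card V).choose 2 := card_edgeFinset_top_eq_card_choose_two
  have hch : (Fintype.card V).choose 2 * 2 = Fintype.card V * (Fintype.card V - 1) := by
    rw [Nat.choose_two_right]
    refine Nat.div_mul_cancel ?_
    have h := Nat.even_mul_succ_self (Fintype.card V - 1)
    rw [Nat.sub_add_cancel (by omega)] at h
    rw [mul_comm]
    exact h.two_dvd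
  have hcast : ((Fintype.card V * (Fintype.card V - 1) : ℕ) : ℤ) =
      (Fintype.card V : ℤ) * ((Fintype.card V : ℤ) - 1) := by
    have h1 : (1 : ℕ) ≤ Fintype.card V := by omega
    push_cast [h1]
    ring
  have hmc : Gᶜ.edgeFinset.card + 4 ≤ Fintype.card V := by omega
  -- a rainbow vertex-disconnection coloring with `rvd G` colors exists
  have hne : {k | ∃ c : V → Fin k, G.IsRVDColoring c}.Nonempty := by
    by_contra h
    rw [Set.not_nonempty_iff_eq_empty] at h
    have : G.rvd = 0 := by
      unfold SimpleGraph.rvd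
      rw [h, Nat.sInf_empty]
    omega
  obtain ⟨c, hc⟩ := Nat.sInf_mem hne
  have hcard : Fintype.card V ≤ G.rvd := by
    have := Fintype.card_le_of_injective c (rvdColoring_injective G hmc c hc)
    simpa [SimpleGraph.rvd] using this
  omega
end

section
/- For every n ≥ 3, let H be the graph on vertex set {v_1, …, v_n} obtained from the complete graph K_n by deleting the edges v_n v_i for all i ∈ {1, …, n−3}. Then H is connected, rvd(H) = n−1, and |E(H)| = n(n−1)/2 − n + 3. Hence the bound |E(G)| ≤ n(n−1)/2 − n + 3 for connected graphs of order n ≥ 3 with rvd(G) = n−1 is attained. -/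
open SimpleGraph

/-- The graph on vertex set `{v_1, …, v_n}` (indexed by `Fin n`, with `v_i`
corresponding to index `i - 1`) obtained from `K_n` by deleting the edges
`v_n v_i` for all `i ∈ {1, …, n-3}`. -/
def extremalGraph (n : ℕ) : SimpleGraph (Fin n) where
  Adj u v := u ≠ v ∧
    ¬(((u : ℕ) = n - 1 ∧ (v : ℕ) < n - 3) ∨ ((v : ℕ) = n - 1 ∧ (u : ℕ) < n - 3))
  symm := ⟨fun u v h => ⟨h.1.symm, fun hc => h.2 hc.symm⟩⟩
  loopless := ⟨fun v h => h.1 rfl⟩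

instance (n : ℕ) : DecidableRel (extremalGraph n).Adj := fun u v =>
  inferInstanceAs (Decidable (u ≠ v ∧
    ¬(((u : ℕ) = n - 1 ∧ (v : ℕ) < n - 3) ∨ ((v : ℕ) = n - 1 ∧ (u : ℕ) < n - 3))))

/-! ### Auxiliary lemmas -/

lemma eg_adj_iff {n : ℕ} (u v : Fin n) : (extremalGraph n).Adj u v ↔ (u : ℕ) ≠ (v : ℕ) ∧
    ¬(((u : ℕ) = n - 1 ∧ (v : ℕ) < n - 3) ∨ ((v : ℕ) = n - 1 ∧ (u : ℕ) < n - 3)) := by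
  constructor
  · rintro ⟨h1, h2⟩; exact ⟨fun h => h1 (Fin.ext h), h2⟩
  · rintro ⟨h1, h2⟩; exact ⟨fun h => h1 (congrArg Fin.val h), h2⟩

lemma not_reach_left {V : Type*} {G : SimpleGraph V} {S : Set V} {x y : V} (hxy : x ≠ y)
    (h : ∀ z, G.Adj x z → z ∈ S) : ¬ (G.delVerts S).Reachable x y := by
  rintro ⟨p⟩
  cases p with
  | nil => exact hxy rfl
  | cons ha _ => exact ha.2.2 (h _ ha.1)

lemma not_reach_right {V : Type*} {G : SimpleGraph V} {S : Set V} {x y : V} (hxy : x ≠ y)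
    (h : ∀ z, G.Adj y z → z ∈ S) : ¬ (G.delVerts S).Reachable x y :=
  fun r => not_reach_left (Ne.symm hxy) h r.symm

/-- The symmetric goal predicate. -/
def RVDGoal {V α : Type*} (G : SimpleGraph V) (c : V → α) (x y : V) : Prop :=
  ∃ S : Set V, x ∉ S ∧ y ∉ S ∧
    (¬ G.Adj x y → ¬ (G.delVerts S).Reachable x y ∧ Set.InjOn c S) ∧
    (G.Adj x y → ¬ ((G.deleteEdges {s(x, y)}).delVerts S).Reachable x y ∧
      (Set.InjOn c (S ∪ {x}) ∨ Set.InjOn c (S ∪ {y})))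

lemma RVDGoal.symm {V α : Type*} {G : SimpleGraph V} {c : V → α} {x y : V}
    (h : RVDGoal G c x y) : RVDGoal G c y x := by
  obtain ⟨S, hx, hy, hna, ha⟩ := h
  refine ⟨S, hy, hx, fun hadj => ?_, fun hadj => ?_⟩
  · obtain ⟨h1, h2⟩ := hna (fun h => hadj h.symm)
    exact ⟨fun r => h1 r.symm, h2⟩
  · obtain ⟨h1, h2⟩ := ha hadj.symm
    refine ⟨fun r => h1 ?_, h2.symm⟩
    rw [Sym2.eq_swap]
    exact r.symm

/-- The extremal coloring: `c i = min i (n-2)`. -/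
def egCol (n : ℕ) (hn : 3 ≤ n) (i : Fin n) : Fin (n - 1) :=
  ⟨min i.val (n - 2), by have := min_le_right i.val (n - 2); omega⟩

lemma egCol_injOn {n : ℕ} (hn : 3 ≤ n) (T : Set (Fin n))
    (h : (⟨n - 2, by omega⟩ : Fin n) ∉ T ∨ (⟨n - 1, by omega⟩ : Fin n) ∉ T) :
    Set.InjOn (egCol n hn) T := by
  intro u hu v hv huv
  have h1 : min u.val (n - 2) = min v.val (n - 2) := congrArg Fin.val huv
  have hu' := u.isLt
  have hv' := v.isLt
  apply Fin.ext
  rcases h with h | h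
  · have h2 : u.val ≠ n - 2 := fun he => h (by rwa [show (⟨n-2, by omega⟩ : Fin n) = u from (Fin.ext he.symm)])
    have h3 : v.val ≠ n - 2 := fun he => h (by rwa [show (⟨n-2, by omega⟩ : Fin n) = v from (Fin.ext he.symm)])
    simp only [Nat.min_def] at h1
    split_ifs at h1 <;> omega
  · have h2 : u.val ≠ n - 1 := fun he => h (by rwa [show (⟨n-1, by omega⟩ : Fin n) = u from (Fin.ext he.symm)])
    have h3 : v.val ≠ n - 1 := fun he => h (by rwa [show (⟨n-1, by omega⟩ : Fin n) = v from (Fin.ext he.symm)])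
    simp only [Nat.min_def] at h1
    split_ifs at h1 <;> omega

lemma egCol_isRVD {n : ℕ} (hn : 3 ≤ n) : (extremalGraph n).IsRVDColoring (egCol n hn) := by
  set G := extremalGraph n with hG
  set c := egCol n hn with hc
  set a : Fin n := ⟨n - 3, by omega⟩ with ha
  set b : Fin n := ⟨n - 2, by omega⟩ with hb
  set w : Fin n := ⟨n - 1, by omega⟩ with hw
  have hav : (a : ℕ) = n - 3 := rfl
  have hbv : (b : ℕ) = n - 2 := rfl
  have hwv : (w : ℕ) = n - 1 := rfl
  -- Case 1 : y = w
  have caseW : ∀ x : Fin n, (x : ℕ) ≠ n - 1 → RVDGoal G c x w := by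
    intro x hx
    have hxw : x ≠ w := fun h => hx (congrArg Fin.val h)
    by_cases hx3 : (x : ℕ) < n - 3
    · -- nonadjacent: S = {a, b}
      have hnadj : ¬ G.Adj x w := by
        rintro ⟨-, h2⟩
        exact h2 (Or.inr ⟨rfl, hx3⟩)
      refine ⟨{a, b}, ?_, ?_, fun _ => ?_, fun hadj => absurd hadj hnadj⟩
      · rintro (h | h) <;> (have := congrArg Fin.val h; simp only [ha, hb, Fin.val_mk] at this; omega)
      · rintro (h | h) <;> (have := congrArg Fin.val h; simp only [ha, hb, Fin.val_mk] at this; omega)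
      · constructor
        · refine not_reach_right hxw ?_
          intro z hz
          rw [eg_adj_iff] at hz
          obtain ⟨h1, h2⟩ := hz
          have hz3 : ¬ ((z : ℕ) < n - 3) := fun hlt => h2 (Or.inl ⟨rfl, hlt⟩)
          have := z.isLt
          have : (z : ℕ) = n - 3 ∨ (z : ℕ) = n - 2 := by omega
          rcases this with h | h
          · exact Or.inl (Fin.ext h)
          · exact Or.inr (Fin.ext h)
        · apply egCol_injOn hn
          right
          rintro (h | h) <;> (have := congrArg Fin.val h; simp only [ha, hb, Fin.val_mk] at this; omega)
    · -- x = a or x = b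
      have hx' := x.isLt
      have hadj : G.Adj x w := by
        rw [eg_adj_iff]
        constructor
        · omega
        · simp only [hw, Fin.val_mk]
          omega
      rcases (by omega : (x : ℕ) = n - 3 ∨ (x : ℕ) = n - 2) with hxa | hxb
      · -- x = a, S = {b}
        refine ⟨{b}, ?_, ?_, fun h => absurd hadj h, fun _ => ?_⟩
        · intro h; have := congrArg Fin.val h; simp only [hb, Fin.val_mk] at this; omega
        · intro h; have := congrArg Fin.val h; simp only [hw, hb, Fin.val_mk] at this; omega
        · constructor
          · refine not_reach_right hxw ?_
            intro z hz
            rw [SimpleGraph.deleteEdges_adj] at hz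
            obtain ⟨hz1, hz2⟩ := hz
            rw [eg_adj_iff] at hz1
            obtain ⟨h1, h2⟩ := hz1
            have hz3 : ¬ ((z : ℕ) < n - 3) := fun hlt => h2 (Or.inl ⟨rfl, hlt⟩)
            have := z.isLt
            have hzc : (z : ℕ) = n - 3 ∨ (z : ℕ) = n - 2 := by omega
            rcases hzc with h | h
            · exfalso
              apply hz2
              rw [Set.mem_singleton_iff, Sym2.eq_swap, Sym2.eq_iff]
              exact Or.inl ⟨Fin.ext (by omega), rfl⟩
            · exact Fin.ext h
          · left
            apply egCol_injOn hn
            right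
            rintro (h | h) <;> (have := congrArg Fin.val h; simp only [hw, hb, Fin.val_mk] at this; omega)
      · -- x = b, S = {a}
        refine ⟨{a}, ?_, ?_, fun h => absurd hadj h, fun _ => ?_⟩
        · intro h; have := congrArg Fin.val h; simp only [ha, Fin.val_mk] at this; omega
        · intro h; have := congrArg Fin.val h; simp only [hw, ha, Fin.val_mk] at this; omega
        · constructor
          · refine not_reach_right hxw ?_
            intro z hz
            rw [SimpleGraph.deleteEdges_adj] at hz
            obtain ⟨hz1, hz2⟩ := hz
            rw [eg_adj_iff] at hz1
            obtain ⟨h1, h2⟩ := hz1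
            have hz3 : ¬ ((z : ℕ) < n - 3) := fun hlt => h2 (Or.inl ⟨rfl, hlt⟩)
            have := z.isLt
            have hzc : (z : ℕ) = n - 3 ∨ (z : ℕ) = n - 2 := by omega
            rcases hzc with h | h
            · exact Fin.ext h
            · exfalso
              apply hz2
              rw [Set.mem_singleton_iff, Sym2.eq_swap, Sym2.eq_iff]
              exact Or.inl ⟨Fin.ext (by omega), rfl⟩
          · left
            apply egCol_injOn hn
            right
            rintro (h | h) <;> (have := congrArg Fin.val h; simp only [hw, ha, Fin.val_mk] at this; omega)
  -- Case 2 : x < n-3, y ≠ w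
  have caseLow : ∀ x y : Fin n, x ≠ y → (x : ℕ) < n - 3 → (y : ℕ) ≠ n - 1 → RVDGoal G c x y := by
    intro x y hxy hx3 hy
    have hadj : G.Adj x y := by
      rw [eg_adj_iff]
      refine ⟨fun h => hxy (Fin.ext h), ?_⟩
      omega
    refine ⟨{z : Fin n | z ≠ x ∧ z ≠ y ∧ z ≠ w}, fun h => h.1 rfl, fun h => h.2.1 rfl,
      fun h => absurd hadj h, fun _ => ?_⟩
    constructor
    · refine not_reach_left hxy ?_
      intro z hz
      rw [SimpleGraph.deleteEdges_adj] at hz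
      obtain ⟨hz1, hz2⟩ := hz
      refine ⟨fun h => hz1.ne h.symm, fun h => hz2 (by rw [h]; exact rfl), fun h => ?_⟩
      subst h
      rw [eg_adj_iff] at hz1
      exact hz1.2 (Or.inr ⟨rfl, hx3⟩)
    · left
      apply egCol_injOn hn
      right
      rintro (h | h)
      · exact h.2.2 rfl
      · have := congrArg Fin.val h; simp only [hw, Fin.val_mk] at this; omega
  -- Case 3 : x = a, y = b
  have caseAB : RVDGoal G c a b := by
    have hab : a ≠ b := by intro h; have := congrArg Fin.val h; simp only [ha, hb, Fin.val_mk] at this; omega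
    have hadj : G.Adj a b := by
      rw [eg_adj_iff]
      simp only [ha, hb, Fin.val_mk]
      omega
    refine ⟨{z : Fin n | z ≠ a ∧ z ≠ b}, fun h => h.1 rfl, fun h => h.2 rfl,
      fun h => absurd hadj h, fun _ => ?_⟩
    constructor
    · refine not_reach_left hab ?_
      intro z hz
      rw [SimpleGraph.deleteEdges_adj] at hz
      obtain ⟨hz1, hz2⟩ := hz
      exact ⟨fun h => hz1.ne h.symm, fun h => hz2 (by rw [h]; exact rfl)⟩
    · left
      apply egCol_injOn hn
      left
      rintro (h | h)
      · exact h.2 rfl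
      · exact hab (h.symm)
  -- dispatch
  intro x y hxy
  show RVDGoal G c x y
  by_cases hx : (x : ℕ) = n - 1
  · have hxw : x = w := Fin.ext hx
    subst hxw
    have hy : (y : ℕ) ≠ n - 1 := fun h => hxy (Fin.ext (by omega)).symm
    exact (caseW y hy).symm
  · by_cases hy : (y : ℕ) = n - 1
    · have hyw : y = w := Fin.ext hy
      subst hyw
      exact caseW x hx
    · by_cases hx3 : (x : ℕ) < n - 3
      · exact caseLow x y hxy hx3 hy
      · by_cases hy3 : (y : ℕ) < n - 3
        · exact (caseLow y x (Ne.symm hxy) hy3 hx).symm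
        · -- both in {n-3, n-2}
          have hx' := x.isLt
          have hy' := y.isLt
          have hne : (x : ℕ) ≠ (y : ℕ) := fun h => hxy (Fin.ext h)
          rcases (by omega : ((x : ℕ) = n - 3 ∧ (y : ℕ) = n - 2) ∨ ((x : ℕ) = n - 2 ∧ (y : ℕ) = n - 3)) with ⟨h1, h2⟩ | ⟨h1, h2⟩
          · have : x = a ∧ y = b := ⟨Fin.ext h1, Fin.ext h2⟩
            rw [this.1, this.2]
            exact caseAB
          · have : x = b ∧ y = a := ⟨Fin.ext h1, Fin.ext h2⟩
            rw [this.1, this.2]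
            exact caseAB.symm

lemma no_small_coloring {n : ℕ} (hn : 3 ≤ n) (c : Fin n → Fin (n - 2))
    (hc : (extremalGraph n).IsRVDColoring c) : False := by
  set a : Fin n := ⟨n - 3, by omega⟩ with ha
  set b : Fin n := ⟨n - 2, by omega⟩ with hb
  have hav : (a : ℕ) = n - 3 := rfl
  have hbv : (b : ℕ) = n - 2 := rfl
  have hab : a ≠ b := by intro h; have := congrArg Fin.val h; simp only [ha, hb, Fin.val_mk] at this; omega
  obtain ⟨S, haS, hbS, -, hA⟩ := hc a b hab
  have hadj : (extremalGraph n).Adj a b := by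
    rw [eg_adj_iff]; simp only [ha, hb, Fin.val_mk]; omega
  obtain ⟨hreach, hinj⟩ := hA hadj
  have hall : ∀ z : Fin n, z ≠ a → z ≠ b → z ∈ S := by
    intro z hza hzb
    by_contra hz
    apply hreach
    have hne : s(a, z) ≠ s(a, b) := by
      intro hq
      rw [Sym2.eq_iff] at hq
      rcases hq with ⟨-, h⟩ | ⟨h, -⟩
      · exact hzb h
      · exact hab h
    have hne2 : s(z, b) ≠ s(a, b) := by
      intro hq
      rw [Sym2.eq_iff] at hq
      rcases hq with ⟨h, -⟩ | ⟨h, -⟩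
      · exact hza h
      · exact hzb h
    have hadj1 : (extremalGraph n).Adj a z := by
      rw [eg_adj_iff]
      have := z.isLt
      constructor
      · intro h; exact hza (Fin.ext h.symm)
      · simp only [ha, Fin.val_mk]; omega
    have hadj2 : (extremalGraph n).Adj z b := by
      rw [eg_adj_iff]
      have := z.isLt
      constructor
      · intro h; exact hzb (Fin.ext h)
      · simp only [hb, Fin.val_mk]; omega
    exact ⟨Walk.cons ⟨SimpleGraph.deleteEdges_adj.mpr ⟨hadj1, hne⟩, haS, hz⟩
      (Walk.cons ⟨SimpleGraph.deleteEdges_adj.mpr ⟨hadj2, hne2⟩, hz, hbS⟩ Walk.nil)⟩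
  have hcard : ∀ v : Fin n, Fintype.card (Fin n) - 1 ≤ Fintype.card (Fin (n - 2)) → False := by
    intro _ h
    simp only [Fintype.card_fin] at h
    omega
  rcases hinj with h | h
  · refine hcard a ?_
    have hsub : ((Finset.univ.erase b : Finset (Fin n)) : Set (Fin n)) ⊆ S ∪ {a} := by
      intro z hz
      simp only [Finset.coe_erase, Set.mem_diff, Set.mem_singleton_iff] at hz
      by_cases hza : z = a
      · exact Or.inr hza
      · exact Or.inl (hall z hza hz.2)
    have := Finset.card_le_card_of_injOn c (fun z _ => Finset.mem_univ _) (h.mono hsub)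
    simpa [Finset.card_erase_of_mem] using this
  · refine hcard a ?_
    have hsub : ((Finset.univ.erase a : Finset (Fin n)) : Set (Fin n)) ⊆ S ∪ {b} := by
      intro z hz
      simp only [Finset.coe_erase, Set.mem_diff, Set.mem_singleton_iff] at hz
      by_cases hzb : z = b
      · exact Or.inr hzb
      · exact Or.inl (hall z hz.2 hzb)
    have := Finset.card_le_card_of_injOn c (fun z _ => Finset.mem_univ _) (h.mono hsub)
    simpa [Finset.card_erase_of_mem] using this

/-- For `n ≥ 3`, the graph `H` obtained from `K_n` by deleting the edges
`v_n v_i`, `i ∈ {1, …, n-3}`, is connected, has `rvd(H) = n - 1` and has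
exactly `n(n-1)/2 - n + 3` edges; hence the bound on the size of connected
graphs of order `n ≥ 3` with `rvd = n - 1` is attained. -/
theorem extremalGraph_attains_bound (n : ℕ) (hn : 3 ≤ n) :
    (extremalGraph n).Connected ∧ (extremalGraph n).rvd = n - 1 ∧
      (extremalGraph n).edgeFinset.card = n * (n - 1) / 2 - n + 3 := by
  set b : Fin n := ⟨n - 2, by omega⟩ with hb
  have hbv : (b : ℕ) = n - 2 := rfl
  have hbadj : ∀ z : Fin n, z ≠ b → (extremalGraph n).Adj b z := by
    intro z hz
    rw [eg_adj_iff]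
    have := z.isLt
    constructor
    · intro h; exact hz (Fin.ext h.symm)
    · simp only [hb, Fin.val_mk]; omega
  refine ⟨?_, ?_, ?_⟩
  · -- connectivity
    rw [connected_iff]
    refine ⟨?_, ⟨b⟩⟩
    intro x y
    have hx : (extremalGraph n).Reachable b x := by
      by_cases h : x = b
      · rw [h]
      · exact (hbadj x h).reachable
    have hy : (extremalGraph n).Reachable b y := by
      by_cases h : y = b
      · rw [h]
      · exact (hbadj y h).reachable
    exact hx.symm.trans hy
  · -- rvd
    have hmem : (n - 1) ∈ {k | ∃ c : Fin n → Fin k, (extremalGraph n).IsRVDColoring c} :=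
      ⟨egCol n hn, egCol_isRVD hn⟩
    refine le_antisymm (Nat.sInf_le hmem) ?_
    apply le_csInf ⟨n - 1, hmem⟩
    rintro k ⟨c, hc⟩
    by_contra hlt
    push_neg at hlt
    have hk : k ≤ n - 2 := by omega
    refine no_small_coloring hn (fun i => Fin.castLE hk (c i)) ?_
    intro x y hxy
    obtain ⟨S, h1, h2, h3, h4⟩ := hc x y hxy
    have inj : ∀ T : Set (Fin n), Set.InjOn c T → Set.InjOn (fun i => Fin.castLE hk (c i)) T :=
      fun T hT u hu v hv he => hT hu hv (Fin.castLE_injective hk he)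
    refine ⟨S, h1, h2, fun hna => ?_, fun hadj => ?_⟩
    · obtain ⟨r, i⟩ := h3 hna
      exact ⟨r, inj _ i⟩
    · obtain ⟨r, i⟩ := h4 hadj
      rcases i with i | i
      · exact ⟨r, Or.inl (inj _ i)⟩
      · exact ⟨r, Or.inr (inj _ i)⟩
  · -- edge count
    classical
    set w : Fin n := ⟨n - 1, by omega⟩ with hw
    have hwv : (w : ℕ) = n - 1 := rfl
    set D : Finset (Sym2 (Fin n)) :=
      (Finset.univ.filter (fun i : Fin n => (i : ℕ) < n - 3)).image (fun i => s(i, w)) with hD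
    have hDcard : D.card = n - 3 := by
      rw [hD, Finset.card_image_of_injOn]
      · have : Finset.univ.filter (fun i : Fin n => (i : ℕ) < n - 3) = Finset.Iio (⟨n - 3, by omega⟩ : Fin n) := by
          ext i
          simp [Fin.lt_def]
        rw [this, Fin.card_Iio]
      · intro i hi j hj hij
        simp only [Finset.coe_filter, Set.mem_setOf_eq, Finset.mem_univ, true_and] at hi hj
        rw [Sym2.eq_iff] at hij
        rcases hij with ⟨h, -⟩ | ⟨h, -⟩
        · exact h
        · exfalso; have := congrArg Fin.val h; simp only [hw, Fin.val_mk] at this; omega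
    have hDsub : D ⊆ (⊤ : SimpleGraph (Fin n)).edgeFinset := by
      intro e he
      rw [hD, Finset.mem_image] at he
      obtain ⟨i, hi, rfl⟩ := he
      simp only [Finset.mem_filter, Finset.mem_univ, true_and] at hi
      rw [mem_edgeFinset]
      simp only [mem_edgeSet, top_adj]
      intro h
      have := congrArg Fin.val h
      simp only [hw, Fin.val_mk] at this
      omega
    have hEq : (extremalGraph n).edgeFinset = (⊤ : SimpleGraph (Fin n)).edgeFinset \ D := by
      ext e
      induction e using Sym2.ind with
      | _ u v =>
        simp only [mem_edgeFinset, Finset.mem_sdiff, mem_edgeSet, top_adj]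
        constructor
        · intro h
          refine ⟨h.1, ?_⟩
          intro hmem
          rw [hD, Finset.mem_image] at hmem
          obtain ⟨i, hi, heq⟩ := hmem
          simp only [Finset.mem_filter, Finset.mem_univ, true_and] at hi
          rw [Sym2.eq_iff] at heq
          have h2 := h.2
          rcases heq with ⟨h3, h4⟩ | ⟨h3, h4⟩
          · subst h3; subst h4
            exact h2 (Or.inr ⟨by simp [hw], hi⟩)
          · subst h3; subst h4
            exact h2 (Or.inl ⟨by simp [hw], hi⟩)
        · rintro ⟨h1, h2⟩
          refine ⟨h1, ?_⟩
          rintro (⟨h3, h4⟩ | ⟨h3, h4⟩)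
          · apply h2
            rw [hD, Finset.mem_image]
            refine ⟨v, by simp [h4], ?_⟩
            rw [show u = w from Fin.ext (by omega)]
            exact Sym2.eq_swap
          · apply h2
            rw [hD, Finset.mem_image]
            refine ⟨u, by simp [h4], ?_⟩
            rw [show v = w from Fin.ext (by omega)]
    rw [hEq, Finset.card_sdiff_of_subset hDsub, hDcard]
    rw [card_edgeFinset_top_eq_card_choose_two]
    rw [Fintype.card_fin, Nat.choose_two_right]
    have h2 : n ≤ n * (n - 1) / 2 := by
      calc n = n * 2 / 2 := by omega
        _ ≤ n * (n - 1) / 2 := Nat.div_le_div_right (Nat.mul_le_mul_left n (by omega))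
    omega
end

section
/- For every integer n ≥ 5, the graph K_n − e obtained from the complete graph K_n by deleting a single edge e satisfies rvd(K_n − e) = n. -/
open SimpleGraph

lemma no_reach {V : Type*} {H : SimpleGraph V} (h : ∀ u v, ¬ H.Adj u v) {x y : V}
    (hxy : x ≠ y) : ¬ H.Reachable x y := by
  rintro ⟨w⟩
  cases w with
  | nil => exact hxy rfl
  | cons h' _ => exact h _ _ h'

lemma id_is_rvd {V : Type*} (G : SimpleGraph V) : G.IsRVDColoring (id : V → V) := by
  intro x y hxy
  refine ⟨{z | z ≠ x ∧ z ≠ y}, by simp, by simp, ?_, ?_⟩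
  · intro hnadj
    refine ⟨no_reach ?_ hxy, Function.injective_id.injOn⟩
    rintro u v ⟨huv, hu, hv⟩
    simp only [Set.mem_setOf_eq, not_and_or, not_not, ne_eq] at hu hv
    rcases hu with rfl | rfl <;> rcases hv with rfl | rfl
    · exact G.loopless.irrefl _ huv
    · exact hnadj huv
    · exact hnadj huv.symm
    · exact G.loopless.irrefl _ huv
  · intro hadj
    refine ⟨no_reach ?_ hxy, Or.inl Function.injective_id.injOn⟩
    rintro u v ⟨huv, hu, hv⟩
    simp only [Set.mem_setOf_eq, not_and_or, not_not, ne_eq] at hu hv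
    rw [SimpleGraph.deleteEdges_adj] at huv
    rcases hu with rfl | rfl <;> rcases hv with rfl | rfl
    · exact G.loopless.irrefl _ huv.1
    · exact huv.2 (by simp)
    · exact huv.2 (by simp [Sym2.eq_swap])
    · exact G.loopless.irrefl _ huv.1

lemma key {V α : Type*} (G : SimpleGraph V) (c : V → α) (hc : G.IsRVDColoring c)
    {u v x y : V} (huv : u ≠ v) (hcc : c u = c v)
    (hxy : G.Adj x y) (hxu : G.Adj x u) (huy : G.Adj u y)
    (hxv : G.Adj x v) (hvy : G.Adj v y) : False := by
  obtain ⟨S, hxS, hyS, -, hA⟩ := hc x y hxy.ne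
  obtain ⟨hnr, hinj⟩ := hA hxy
  have hmem : ∀ w, G.Adj x w → G.Adj w y → w ∈ S := by
    intro w h1 h2
    by_contra hwS
    apply hnr
    have e1 : ((G.deleteEdges {s(x,y)}).delVerts S).Adj x w := by
      refine ⟨?_, hxS, hwS⟩
      rw [SimpleGraph.deleteEdges_adj]
      refine ⟨h1, ?_⟩
      simp only [Set.mem_singleton_iff, Sym2.eq_iff]
      push_neg
      exact ⟨fun _ => h2.ne, fun h => absurd h hxy.ne⟩
    have e2 : ((G.deleteEdges {s(x,y)}).delVerts S).Adj w y := by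
      refine ⟨?_, hwS, hyS⟩
      rw [SimpleGraph.deleteEdges_adj]
      refine ⟨h2, ?_⟩
      simp only [Set.mem_singleton_iff, Sym2.eq_iff]
      push_neg
      exact ⟨fun h => absurd h h1.ne', fun _ => fun h => hxy.ne' h⟩
    exact e1.reachable.trans e2.reachable
  have hu := hmem u hxu huy
  have hv := hmem v hxv hvy
  rcases hinj with h | h
  · exact huv (h (Or.inl hu) (Or.inl hv) hcc)
  · exact huv (h (Or.inl hu) (Or.inl hv) hcc)

lemma exists_not_mem_of_card_lt {n : ℕ} (s : Finset (Fin n)) (h : s.card < n) :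
    ∃ x, x ∉ s := by
  by_contra hx
  push_neg at hx
  have h2 := Finset.card_le_card (fun z _ => hx z : (Finset.univ : Finset (Fin n)) ⊆ s)
  simp at h2
  omega

lemma card3 {α : Type*} [DecidableEq α] (p q r : α) : ({p, q, r} : Finset α).card ≤ 3 := by
  have h1 := Finset.card_insert_le p ({q, r} : Finset α)
  have h2 := Finset.card_insert_le q ({r} : Finset α)
  simp at h1 h2
  omega

lemma card4 {α : Type*} [DecidableEq α] (p q r s : α) :
    ({p, q, r, s} : Finset α).card ≤ 4 := by
  have h1 := Finset.card_insert_le p ({q, r, s} : Finset α)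
  have h2 := card3 q r s
  omega

/-- For `n ≥ 5`, the graph `K_n - e` obtained from the complete graph on `n`
vertices by deleting a single edge `e` satisfies `rvd(K_n - e) = n`. -/
theorem rvd_complete_sub_edge (n : ℕ) (hn : 5 ≤ n) (a b : Fin n) (hab : a ≠ b) :
    ((⊤ : SimpleGraph (Fin n)).deleteEdges {s(a, b)}).rvd = n := by
  set G := (⊤ : SimpleGraph (Fin n)).deleteEdges {s(a, b)} with hG
  have hmem : n ∈ {k | ∃ c : Fin n → Fin k, G.IsRVDColoring c} := ⟨_, id_is_rvd G⟩
  refine le_antisymm (Nat.sInf_le hmem) (le_csInf ⟨n, hmem⟩ ?_)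
  rintro k ⟨c, hc⟩
  by_contra hkn
  push_neg at hkn
  obtain ⟨u, v, huv, hcc⟩ := Fintype.exists_ne_map_eq_of_card_lt c (by simpa using hkn)
  have hadj : ∀ p q : Fin n, p ≠ q → p ≠ a → p ≠ b → G.Adj p q := by
    intro p q hpq hpa hpb
    rw [hG, SimpleGraph.deleteEdges_adj]
    refine ⟨by simpa using hpq, ?_⟩
    simp only [Set.mem_singleton_iff, Sym2.eq_iff]
    push_neg
    exact ⟨fun h => absurd h hpa, fun h => absurd h hpb⟩
  by_cases ha : u = a ∨ u = b ∨ v = a ∨ v = b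
  · have hcard : ({u, v, a, b} : Finset (Fin n)).card ≤ 3 := by
      rcases ha with rfl | rfl | rfl | rfl
      · exact le_trans (Finset.card_le_card (by intro z hz; simp at hz ⊢; tauto)) (card3 u v b)
      · exact le_trans (Finset.card_le_card (by intro z hz; simp at hz ⊢; tauto)) (card3 u v a)
      · exact le_trans (Finset.card_le_card (by intro z hz; simp at hz ⊢; tauto)) (card3 u v b)
      · exact le_trans (Finset.card_le_card (by intro z hz; simp at hz ⊢; tauto)) (card3 u v a)
    obtain ⟨x, hx⟩ := exists_not_mem_of_card_lt {u, v, a, b} (by omega)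
    obtain ⟨y, hy⟩ := exists_not_mem_of_card_lt (insert x {u, v, a, b})
      (by have := Finset.card_insert_le x ({u, v, a, b} : Finset (Fin n)); omega)
    simp only [Finset.mem_insert, Finset.mem_singleton, not_or] at hx hy
    obtain ⟨hxu, hxv, hxa, hxb⟩ := hx
    obtain ⟨hyx, hyu, hyv, hya, hyb⟩ := hy
    exact key G c hc huv hcc (hadj x y (Ne.symm hyx) hxa hxb) (hadj x u hxu hxa hxb)
      (hadj y u hyu hya hyb).symm (hadj x v hxv hxa hxb) (hadj y v hyv hya hyb).symm
  · push_neg at ha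
    obtain ⟨hua, hub, hva, hvb⟩ := ha
    obtain ⟨x, hx⟩ := exists_not_mem_of_card_lt {u, v, a, b} (by have := card4 u v a b; omega)
    simp only [Finset.mem_insert, Finset.mem_singleton, not_or] at hx
    obtain ⟨hxu, hxv, hxa, hxb⟩ := hx
    obtain ⟨y, hy⟩ := exists_not_mem_of_card_lt {u, v, x} (by have := card3 u v x; omega)
    simp only [Finset.mem_insert, Finset.mem_singleton, not_or] at hy
    obtain ⟨hyu, hyv, hyx⟩ := hy
    exact key G c hc huv hcc (hadj x y (Ne.symm hyx) hxa hxb) (hadj x u hxu hxa hxb)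
      (hadj u y (Ne.symm hyu) hua hub) (hadj x v hxv hxa hxb)
      (hadj v y (Ne.symm hyv) hva hvb)
end

section
/- For every integer n ≥ 6 and any two distinct edges e_1, e_2 of the complete graph K_n, the graph K_n − 2e obtained from K_n by deleting e_1 and e_2 satisfies rvd(K_n − 2e) = n. -/
open SimpleGraph

private lemma pick_pair {V : Type*} [DecidableEq V] (W : Finset V) (F : Finset (Sym2 V))
    (h : F.card + 2 ≤ W.card) :
    ∃ x ∈ W, ∃ y ∈ W, x ≠ y ∧ s(x, y) ∉ F := by
  by_contra hcon
  push_neg at hcon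
  set A := W.offDiag with hA
  have himg : A.image (fun p => s(p.1, p.2)) ⊆ F := by
    intro e he
    simp only [Finset.mem_image] at he
    obtain ⟨p, hp, rfl⟩ := he
    rw [Finset.mem_offDiag] at hp
    exact hcon _ hp.1 _ hp.2.1 hp.2.2
  have hcard : A.card ≤ 2 * (A.image (fun p => s(p.1, p.2))).card := by
    apply Finset.card_le_mul_card_image
    intro e he
    induction e using Sym2.ind with
    | _ a b =>
      have hsub : A.filter (fun p => s(p.1, p.2) = s(a, b)) ⊆ {(a, b), (b, a)} := by
        intro p hp
        simp only [Finset.mem_filter] at hp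
        have h2 := Sym2.eq_iff.mp hp.2
        simp only [Finset.mem_insert, Finset.mem_singleton]
        rcases h2 with ⟨h1, h2⟩ | ⟨h1, h2⟩
        · left; exact Prod.ext h1 h2
        · right; exact Prod.ext h1 h2
      calc (A.filter (fun p => s(p.1, p.2) = s(a, b))).card
          ≤ ({(a, b), (b, a)} : Finset (V × V)).card := Finset.card_le_card hsub
        _ ≤ 2 := (Finset.card_insert_le _ _).trans (by simp)
  have hAcard : A.card = W.card * W.card - W.card := Finset.offDiag_card W
  have hFcard : (A.image (fun p => s(p.1, p.2))).card ≤ F.card := Finset.card_le_card himg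
  obtain ⟨t, ht⟩ := Nat.exists_eq_add_of_le h
  rw [hAcard, ht] at hcard
  have h2 : (F.card + 2 + t) * (F.card + 2 + t) - (F.card + 2 + t) ≤ 2 * F.card :=
    hcard.trans (by omega)
  rw [Nat.sub_le_iff_le_add] at h2
  nlinarith [h2]

private lemma sdiff_card_le_one {n : ℕ} (u v a b : Fin n)
    (h : a = u ∨ a = v ∨ b = u ∨ b = v) :
    ((({a, b} : Finset (Fin n)) \ {u, v}).card ≤ 1) := by
  rw [Finset.card_le_one]
  intro x hx y hy
  simp only [Finset.mem_sdiff, Finset.mem_insert, Finset.mem_singleton] at hx hy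
  rcases h with rfl | rfl | rfl | rfl <;> aesop

private lemma endpoint_mem {n : ℕ} (u v a b : Fin n) :
    ∀ z ∈ s(a, b), z ∈ (({u, v} : Finset (Fin n)) ∪ (({a, b} : Finset (Fin n)) \ {u, v})) := by
  intro z hz
  rw [Sym2.mem_iff] at hz
  simp only [Finset.mem_union, Finset.mem_sdiff, Finset.mem_insert, Finset.mem_singleton]
  by_cases h : z = u ∨ z = v
  · exact Or.inl h
  · exact Or.inr ⟨hz, h⟩

private lemma key_core {n : ℕ} (hn : 6 ≤ n) (u v : Fin n) (e₁ e₂ : Sym2 (Fin n))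
    (bad : Finset (Fin n)) (F : Finset (Sym2 (Fin n)))
    (hu : u ∈ bad) (hv : v ∈ bad) (hcard : bad.card + F.card ≤ 4)
    (hE : ∀ e ∈ ({e₁, e₂} : Set (Sym2 (Fin n))),
      (∀ z ∈ e, z ∈ bad) ∨ (e ∈ F ∧ ∀ z ∈ e, z ≠ u ∧ z ≠ v)) :
    ∃ x y : Fin n, x ≠ y ∧ x ≠ u ∧ x ≠ v ∧ y ≠ u ∧ y ≠ v ∧
      ∀ e ∈ ({e₁, e₂} : Set (Sym2 (Fin n))),
        s(x, y) ≠ e ∧ s(u, x) ≠ e ∧ s(u, y) ≠ e ∧ s(v, x) ≠ e ∧ s(v, y) ≠ e := by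
  have hW : F.card + 2 ≤ (Finset.univ \ bad).card := by
    rw [Finset.card_sdiff_of_subset (Finset.subset_univ _)]
    have : (Finset.univ : Finset (Fin n)).card = n := by simp
    omega
  obtain ⟨x, hx, y, hy, hxy, hxyF⟩ := pick_pair _ F hW
  rw [Finset.mem_sdiff] at hx hy
  have hxbad := hx.2
  have hybad := hy.2
  refine ⟨x, y, hxy, fun h => hxbad (h ▸ hu), fun h => hxbad (h ▸ hv),
    fun h => hybad (h ▸ hu), fun h => hybad (h ▸ hv), ?_⟩
  intro e he
  rcases hE e he with hall | ⟨heF, havoid⟩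
  · refine ⟨?_, ?_, ?_, ?_, ?_⟩ <;> intro hc
    · exact hxbad (hall x (hc ▸ Sym2.mem_mk_left x y))
    · exact hxbad (hall x (hc ▸ Sym2.mem_mk_right u x))
    · exact hybad (hall y (hc ▸ Sym2.mem_mk_right u y))
    · exact hxbad (hall x (hc ▸ Sym2.mem_mk_right v x))
    · exact hybad (hall y (hc ▸ Sym2.mem_mk_right v y))
  · refine ⟨fun h => hxyF (h ▸ heF), ?_, ?_, ?_, ?_⟩ <;> intro hc
    · exact (havoid u (hc ▸ Sym2.mem_mk_left u x)).1 rfl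
    · exact (havoid u (hc ▸ Sym2.mem_mk_left u y)).1 rfl
    · exact (havoid v (hc ▸ Sym2.mem_mk_left v x)).2 rfl
    · exact (havoid v (hc ▸ Sym2.mem_mk_left v y)).2 rfl

private lemma key_s11 {n : ℕ} (hn : 6 ≤ n) (e₁ e₂ : Sym2 (Fin n)) (hne : e₁ ≠ e₂)
    (u v : Fin n) :
    ∃ x y : Fin n, x ≠ y ∧ x ≠ u ∧ x ≠ v ∧ y ≠ u ∧ y ≠ v ∧
      ∀ e ∈ ({e₁, e₂} : Set (Sym2 (Fin n))),
        s(x, y) ≠ e ∧ s(u, x) ≠ e ∧ s(u, y) ≠ e ∧ s(v, x) ≠ e ∧ s(v, y) ≠ e := by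
  induction e₁ using Sym2.ind with
  | _ a₁ b₁ =>
  induction e₂ using Sym2.ind with
  | _ a₂ b₂ =>
  have huv2 : (({u, v} : Finset (Fin n))).card ≤ 2 :=
    (Finset.card_insert_le _ _).trans (by simp)
  have hmu : u ∈ ({u, v} : Finset (Fin n)) := by simp
  have hmv : v ∈ ({u, v} : Finset (Fin n)) := by simp
  by_cases hT₁ : a₁ = u ∨ a₁ = v ∨ b₁ = u ∨ b₁ = v
  · by_cases hT₂ : a₂ = u ∨ a₂ = v ∨ b₂ = u ∨ b₂ = v
    · refine key_core hn u v _ _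
        ((({u, v} : Finset (Fin n)) ∪ (({a₁, b₁} : Finset (Fin n)) \ {u, v}))
          ∪ (({a₂, b₂} : Finset (Fin n)) \ {u, v})) ∅ ?_ ?_ ?_ ?_
      · exact Finset.mem_union_left _ (Finset.mem_union_left _ hmu)
      · exact Finset.mem_union_left _ (Finset.mem_union_left _ hmv)
      · have c1 := sdiff_card_le_one u v a₁ b₁ hT₁
        have c2 := sdiff_card_le_one u v a₂ b₂ hT₂
        have d1 := Finset.card_union_le
          ((({u, v} : Finset (Fin n)) ∪ (({a₁, b₁} : Finset (Fin n)) \ {u, v})))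
          ((({a₂, b₂} : Finset (Fin n)) \ {u, v}))
        have d2 := Finset.card_union_le ({u, v} : Finset (Fin n))
          ((({a₁, b₁} : Finset (Fin n)) \ {u, v}))
        simp only [Finset.card_empty]
        omega
      · rintro e (rfl | rfl)
        · refine Or.inl fun z hz => ?_
          have h := endpoint_mem u v a₁ b₁ z hz
          simp only [Finset.mem_union] at h ⊢
          tauto
        · refine Or.inl fun z hz => ?_
          have h := endpoint_mem u v a₂ b₂ z hz
          simp only [Finset.mem_union] at h ⊢
          tauto
    · push_neg at hT₂
      refine key_core hn u v _ _
        ((({u, v} : Finset (Fin n)) ∪ (({a₁, b₁} : Finset (Fin n)) \ {u, v})))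
        {s(a₂, b₂)} ?_ ?_ ?_ ?_
      · exact Finset.mem_union_left _ hmu
      · exact Finset.mem_union_left _ hmv
      · have c1 := sdiff_card_le_one u v a₁ b₁ hT₁
        have d2 := Finset.card_union_le ({u, v} : Finset (Fin n))
          ((({a₁, b₁} : Finset (Fin n)) \ {u, v}))
        simp only [Finset.card_singleton]
        omega
      · rintro e (rfl | rfl)
        · exact Or.inl (endpoint_mem u v a₁ b₁)
        · refine Or.inr ⟨by simp, fun z hz => ?_⟩
          rw [Sym2.mem_iff] at hz
          rcases hz with rfl | rfl
          · exact ⟨hT₂.1, hT₂.2.1⟩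
          · exact ⟨hT₂.2.2.1, hT₂.2.2.2⟩
  · push_neg at hT₁
    by_cases hT₂ : a₂ = u ∨ a₂ = v ∨ b₂ = u ∨ b₂ = v
    · refine key_core hn u v _ _
        ((({u, v} : Finset (Fin n)) ∪ (({a₂, b₂} : Finset (Fin n)) \ {u, v})))
        {s(a₁, b₁)} ?_ ?_ ?_ ?_
      · exact Finset.mem_union_left _ hmu
      · exact Finset.mem_union_left _ hmv
      · have c2 := sdiff_card_le_one u v a₂ b₂ hT₂
        have d2 := Finset.card_union_le ({u, v} : Finset (Fin n))
          ((({a₂, b₂} : Finset (Fin n)) \ {u, v}))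
        simp only [Finset.card_singleton]
        omega
      · rintro e (rfl | rfl)
        · refine Or.inr ⟨by simp, fun z hz => ?_⟩
          rw [Sym2.mem_iff] at hz
          rcases hz with rfl | rfl
          · exact ⟨hT₁.1, hT₁.2.1⟩
          · exact ⟨hT₁.2.2.1, hT₁.2.2.2⟩
        · exact Or.inl (endpoint_mem u v a₂ b₂)
    · push_neg at hT₂
      refine key_core hn u v _ _ ({u, v} : Finset (Fin n))
        {s(a₁, b₁), s(a₂, b₂)} hmu hmv ?_ ?_
      · have : ({s(a₁, b₁), s(a₂, b₂)} : Finset (Sym2 (Fin n))).card ≤ 2 :=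
          (Finset.card_insert_le _ _).trans (by simp)
        omega
      · rintro e (rfl | rfl)
        · refine Or.inr ⟨by simp, fun z hz => ?_⟩
          rw [Sym2.mem_iff] at hz
          rcases hz with rfl | rfl
          · exact ⟨hT₁.1, hT₁.2.1⟩
          · exact ⟨hT₁.2.2.1, hT₁.2.2.2⟩
        · refine Or.inr ⟨by simp, fun z hz => ?_⟩
          rw [Sym2.mem_iff] at hz
          rcases hz with rfl | rfl
          · exact ⟨hT₂.1, hT₂.2.1⟩
          · exact ⟨hT₂.2.2.1, hT₂.2.2.2⟩

private lemma delVerts_eq_bot {V : Type*} (H : SimpleGraph V) (x y : V) (h : ¬ H.Adj x y) :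
    H.delVerts {z | z ≠ x ∧ z ≠ y} = ⊥ := by
  ext a b
  simp only [bot_adj, iff_false]
  rintro ⟨hab, ha, hb⟩
  simp only [Set.mem_setOf_eq, not_and_or, not_not] at ha hb
  rcases ha with rfl | rfl <;> rcases hb with rfl | rfl
  · exact H.loopless.irrefl _ hab
  · exact h hab
  · exact h hab.symm
  · exact H.loopless.irrefl _ hab

/-- For `n ≥ 6` and any two distinct edges `e₁, e₂` of the complete graph on
`n` vertices, the graph `K_n - 2e` obtained by deleting `e₁` and `e₂`
satisfies `rvd(K_n - 2e) = n`. -/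
theorem rvd_complete_sub_two_edges (n : ℕ) (hn : 6 ≤ n) (e₁ e₂ : Sym2 (Fin n))
    (h₁ : e₁ ∈ (⊤ : SimpleGraph (Fin n)).edgeSet)
    (h₂ : e₂ ∈ (⊤ : SimpleGraph (Fin n)).edgeSet) (hne : e₁ ≠ e₂) :
    ((⊤ : SimpleGraph (Fin n)).deleteEdges {e₁, e₂}).rvd = n := by
  set G := (⊤ : SimpleGraph (Fin n)).deleteEdges {e₁, e₂} with hG
  have hmem : n ∈ {k | ∃ c : Fin n → Fin k, G.IsRVDColoring c} := by
    refine ⟨fun i => i, fun x y hxy => ?_⟩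
    have hinj : Set.InjOn (fun i : Fin n => i) ⊤ := fun a _ b _ hab => hab
    refine ⟨{z | z ≠ x ∧ z ≠ y}, by simp, by simp, ?_, ?_⟩
    · intro hnadj
      refine ⟨?_, hinj.mono (Set.subset_univ _)⟩
      rw [delVerts_eq_bot _ _ _ hnadj, reachable_bot]
      exact hxy
    · intro hadj
      have hnadj : ¬ (G.deleteEdges {s(x, y)}).Adj x y := by
        rw [deleteEdges_adj]
        rintro ⟨-, hc⟩
        exact hc rfl
      refine ⟨?_, Or.inl (hinj.mono (Set.subset_univ _))⟩
      rw [delVerts_eq_bot _ _ _ hnadj, reachable_bot]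
      exact hxy
  refine le_antisymm (Nat.sInf_le hmem) (le_csInf ⟨n, hmem⟩ ?_)
  rintro k ⟨c, hc⟩
  by_contra hkn
  push_neg at hkn
  obtain ⟨u, v, huv, hcuv⟩ := Fintype.exists_ne_map_eq_of_card_lt c (by simpa using hkn)
  obtain ⟨x, y, hxy, hxu, hxv, hyu, hyv, hE⟩ := key_s11 hn e₁ e₂ hne u v
  have he1 : e₁ ∈ ({e₁, e₂} : Set (Sym2 (Fin n))) := Set.mem_insert _ _
  have he2 : e₂ ∈ ({e₁, e₂} : Set (Sym2 (Fin n))) := Set.mem_insert_of_mem _ rfl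
  have hGadj : ∀ p q : Fin n, p ≠ q → s(p, q) ≠ e₁ → s(p, q) ≠ e₂ → G.Adj p q := by
    intro p q hpq hp1 hp2
    rw [hG, deleteEdges_adj]
    refine ⟨by simp [hpq], ?_⟩
    rintro (h | h)
    · exact hp1 h
    · exact hp2 h
  have hadj : G.Adj x y := hGadj x y hxy (hE e₁ he1).1 (hE e₂ he2).1
  obtain ⟨S, hxS, hyS, -, hA⟩ := hc x y hxy
  obtain ⟨hreach, hinj⟩ := hA hadj
  have hmemS : ∀ w : Fin n, w ≠ x → w ≠ y →
      s(w, x) ≠ e₁ → s(w, x) ≠ e₂ → s(w, y) ≠ e₁ → s(w, y) ≠ e₂ → w ∈ S := by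
    intro w hwx hwy h1 h2 h3 h4
    by_contra hwS
    apply hreach
    have hA1 : ((G.deleteEdges {s(x, y)}).delVerts S).Adj x w := by
      refine ⟨?_, hxS, hwS⟩
      rw [deleteEdges_adj]
      refine ⟨(hGadj w x hwx h1 h2).symm, ?_⟩
      rintro h
      rw [Set.mem_singleton_iff, Sym2.eq_iff] at h
      rcases h with ⟨-, rfl⟩ | ⟨rfl, -⟩
      · exact hwy rfl
      · exact hxy rfl
    have hA2 : ((G.deleteEdges {s(x, y)}).delVerts S).Adj w y := by
      refine ⟨?_, hwS, hyS⟩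
      rw [deleteEdges_adj]
      refine ⟨hGadj w y hwy h3 h4, ?_⟩
      rintro h
      rw [Set.mem_singleton_iff, Sym2.eq_iff] at h
      rcases h with ⟨rfl, -⟩ | ⟨-, rfl⟩
      · exact hwx rfl
      · exact hxy rfl
    exact hA1.reachable.trans hA2.reachable
  have huS : u ∈ S := by
    exact hmemS u (Ne.symm hxu) (Ne.symm hyu) (hE e₁ he1).2.1 (hE e₂ he2).2.1
      (hE e₁ he1).2.2.1 (hE e₂ he2).2.2.1
  have hvS : v ∈ S := by
    exact hmemS v (Ne.symm hxv) (Ne.symm hyv) (hE e₁ he1).2.2.2.1 (hE e₂ he2).2.2.2.1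
      (hE e₁ he1).2.2.2.2 (hE e₂ he2).2.2.2.2
  rcases hinj with h | h
  · exact huv (h (Set.mem_union_left _ huS) (Set.mem_union_left _ hvS) hcuv)
  · exact huv (h (Set.mem_union_left _ huS) (Set.mem_union_left _ hvS) hcuv)
end

section
/- Let G be a connected simple graph of order n with 5 ≤ n ≤ 7 such that rvd(G) = 1 (equivalently, G is a tree) and such that the complement Ḡ is connected. Then rvd(Ḡ) ≥ n−2. -/
open SimpleGraph

private lemma delVerts_adj' {V : Type*} (G : SimpleGraph V) (S : Set V) (p q : V) :
    (G.delVerts S).Adj p q ↔ G.Adj p q ∧ p ∉ S ∧ q ∉ S := Iff.rfl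

private lemma delVerts_empty' {V : Type*} (G : SimpleGraph V) : G.delVerts ∅ = G := by
  ext u v
  simp [delVerts_adj']

private lemma no_nbr_not_reachable {V : Type*} {K : SimpleGraph V} {x y : V}
    (hxy : x ≠ y) (h : ∀ z, ¬ K.Adj x z) : ¬ K.Reachable x y := by
  rintro ⟨p⟩
  cases p with
  | nil => exact hxy rfl
  | cons h' _ => exact h _ h'

private lemma closed_walk_mem {V : Type*} {K : SimpleGraph V} {C : Set V}
    (hC : ∀ p ∈ C, ∀ q, K.Adj p q → q ∈ C) :
    ∀ {s t : V}, K.Walk s t → s ∈ C → t ∈ C := by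
  intro s t p
  induction p with
  | nil => exact id
  | cons h p ih => exact fun hs => ih (hC _ hs _ h)

/-- Every graph admits a rainbow vertex-disconnection coloring with `|V|` colors. -/
private lemma rvd_full_coloring {V : Type*} [Fintype V] (H : SimpleGraph V) :
    ∃ c : V → Fin (Fintype.card V), H.IsRVDColoring c := by
  classical
  refine ⟨Fintype.equivFin V, ?_⟩
  intro x y hxy
  refine ⟨{z | z ≠ x ∧ z ≠ y}, by simp, by simp, ?_, ?_⟩
  · intro hadj
    refine ⟨no_nbr_not_reachable hxy ?_, fun a _ b _ h => (Fintype.equivFin V).injective h⟩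
    rintro z ⟨hz, _, hz2⟩
    simp only [Set.mem_setOf_eq, not_and, not_not] at hz2
    rcases Classical.em (z = x) with rfl | hne
    · exact H.loopless.irrefl _ hz
    · exact hadj (hz2 hne ▸ hz)
  · intro hadj
    refine ⟨no_nbr_not_reachable hxy ?_, Or.inl fun a _ b _ h => (Fintype.equivFin V).injective h⟩
    rintro z ⟨hz, _, hz2⟩
    simp only [Set.mem_setOf_eq, not_and, not_not] at hz2
    rw [SimpleGraph.deleteEdges_adj] at hz
    rcases Classical.em (z = x) with rfl | hne
    · exact H.loopless.irrefl _ hz.1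
    · exact hz.2 (by simp [hz2 hne])

private lemma exists_notmem {V : Type*} [Fintype V] (s : Finset V)
    (h : s.card < Fintype.card V) : ∃ x, x ∉ s := by
  by_contra hc
  push_neg at hc
  have : s = Finset.univ := Finset.eq_univ_iff_forall.mpr hc
  rw [this, Finset.card_univ] at h
  omega

private lemma leaf_not_adj {V : Type*} [Fintype V] [DecidableEq V] {G : SimpleGraph V}
    [DecidableRel G.Adj] (hG : G.Connected) (h5 : 5 ≤ Fintype.card V) {u v a b : V}
    (hNu : G.neighborFinset u = {a}) (hNv : G.neighborFinset v = {b}) (huv : u ≠ v) :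
    ¬ G.Adj u v := by
  intro hadj
  have hva : v = a := by
    have := (G.mem_neighborFinset u v).mpr hadj
    rwa [hNu, Finset.mem_singleton] at this
  have hub : u = b := by
    have := (G.mem_neighborFinset v u).mpr hadj.symm
    rwa [hNv, Finset.mem_singleton] at this
  obtain ⟨x, hx⟩ : ∃ x, x ∉ ({u, v} : Finset V) := by
    apply exists_notmem
    have h1 := Finset.card_insert_le u ({v} : Finset V)
    have h2 := Finset.card_singleton v
    omega
  have hclosed : ∀ p ∈ ({u, v} : Set V), ∀ q, G.Adj p q → q ∈ ({u, v} : Set V) := by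
    rintro p hp q hq
    have hqmem := (G.mem_neighborFinset p q).mpr hq
    rcases hp with rfl | hp
    · rw [hNu, Finset.mem_singleton] at hqmem
      right
      rw [hqmem, ← hva]
      rfl
    · rcases hp with rfl
      rw [hNv, Finset.mem_singleton] at hqmem
      left
      rw [hqmem, ← hub]
  obtain ⟨p⟩ := hG.preconnected u x
  have hxC := closed_walk_mem hclosed p (by left; rfl)
  simp only [Finset.mem_insert, Finset.mem_singleton, not_or] at hx
  rcases hxC with h | h
  · exact hx.1 h
  · exact hx.2 h

private lemma exists_good_leaves {V : Type*} [Fintype V] [DecidableEq V] {G : SimpleGraph V}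
    [DecidableRel G.Adj] (hG : G.Connected)
    (hbr : ∀ ⦃x y : V⦄, G.Adj x y → ¬ (G.deleteEdges {s(x, y)}).Reachable x y)
    (h5 : 5 ≤ Fintype.card V) :
    ∃ u v a b : V, u ≠ v ∧ ¬ G.Adj u v ∧ G.neighborFinset u = {a} ∧
      G.neighborFinset v = {b} ∧ (a = b ∨ ¬ G.Adj a b) := by
  have hnontriv : Nontrivial V := Fintype.one_lt_card_iff_nontrivial.mp (by omega)
  have hdeg : ∀ v : V, 1 ≤ G.degree v := by
    intro v
    obtain ⟨w, hw⟩ := exists_ne v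
    obtain ⟨p⟩ := hG.preconnected v w
    cases p with
    | nil => exact absurd rfl hw
    | cons h _ => exact G.degree_pos_iff_exists_adj v |>.mpr ⟨_, h⟩
  have hac : G.IsAcyclic :=
    isAcyclic_iff_forall_adj_isBridge.mpr fun v w h => isBridge_iff.mpr (hbr h)
  have htree : G.IsTree := ⟨hG, hac⟩
  have hedge : G.edgeFinset.card + 1 = Fintype.card V := htree.card_edgeFinset
  have hsum : ∑ v, G.degree v = 2 * G.edgeFinset.card := G.sum_degrees_eq_twice_card_edges
  set Lf : Finset V := Finset.univ.filter (fun v => G.degree v = 1) with hLfdef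
  have hsplit : ∑ v ∈ Lf, G.degree v + ∑ v ∈ Lfᶜ, G.degree v = ∑ v, G.degree v :=
    Finset.sum_add_sum_compl Lf _
  have hLfsum : ∑ v ∈ Lf, G.degree v = Lf.card := by
    rw [Finset.sum_congr rfl (fun v hv => (Finset.mem_filter.mp hv).2), Finset.sum_const,
      smul_eq_mul, mul_one]
  have hcompl_ge : ∀ v ∈ Lfᶜ, 2 ≤ G.degree v := by
    intro v hv
    have h1 := hdeg v
    have h2 : ¬ (G.degree v = 1) := by
      have := Finset.mem_compl.mp hv
      simpa [hLfdef] using this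
    omega
  have hcompl_sum : Lfᶜ.card * 2 ≤ ∑ v ∈ Lfᶜ, G.degree v := by
    have := Finset.card_nsmul_le_sum Lfᶜ (fun v => G.degree v) 2 hcompl_ge
    simpa [smul_eq_mul] using this
  have hcc : Lfᶜ.card = Fintype.card V - Lf.card := Finset.card_compl Lf
  have hle : Lf.card ≤ Fintype.card V := Finset.card_le_univ Lf
  have hLf2 : 2 ≤ Lf.card := by omega
  obtain ⟨u, hu, v, hv, huv⟩ := Finset.one_lt_card.mp (by omega : 1 < Lf.card)
  have leaf_nbr : ∀ w ∈ Lf, ∃ a, G.neighborFinset w = {a} := by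
    intro w hw
    exact Finset.card_eq_one.mp ((Finset.mem_filter.mp hw).2)
  obtain ⟨a, hNu⟩ := leaf_nbr u hu
  obtain ⟨b, hNv⟩ := leaf_nbr v hv
  have hnadj : ¬ G.Adj u v := leaf_not_adj hG h5 hNu hNv huv
  by_cases hab : a = b ∨ ¬ G.Adj a b
  · exact ⟨u, v, a, b, huv, hnadj, hNu, hNv, hab⟩
  push_neg at hab
  obtain ⟨hab_ne, hab_adj⟩ := hab
  have hu_adj : ∀ w, G.Adj u w ↔ w = a := fun w => by
    rw [← SimpleGraph.mem_neighborFinset, hNu, Finset.mem_singleton]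
  have hv_adj : ∀ w, G.Adj v w ↔ w = b := fun w => by
    rw [← SimpleGraph.mem_neighborFinset, hNv, Finset.mem_singleton]
  rcases Nat.lt_or_ge Lf.card 3 with h3 | h3
  · -- exactly two leaves: G is a path u-a-…-b-v with deg a = deg b = 2, contradiction
    exfalso
    have hLfeq : Lf = {u, v} := by
      refine (Finset.eq_of_subset_of_card_le ?_ ?_).symm
      · intro z hz
        simp only [Finset.mem_insert, Finset.mem_singleton] at hz
        rcases hz with rfl | rfl
        · exact hu
        · exact hv
      · rw [Finset.card_pair huv]; omega
    have hau : a ≠ u := by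
      intro h
      have := (hu_adj a).mpr rfl
      rw [h] at this
      exact G.loopless.irrefl u this
    have hav : a ≠ v := by
      intro h
      have := (hu_adj a).mpr rfl
      rw [h] at this
      exact hnadj this
    have hbv : b ≠ v := by
      intro h
      have := (hv_adj b).mpr rfl
      rw [h] at this
      exact G.loopless.irrefl v this
    have hbu : b ≠ u := by
      intro h
      have := (hv_adj b).mpr rfl
      rw [h] at this
      exact hnadj this.symm
    have haC : a ∈ Lfᶜ := by
      rw [Finset.mem_compl, hLfeq]
      simp [hau, hav]
    have hbC : b ∈ Lfᶜ := by
      rw [Finset.mem_compl, hLfeq]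
      simp [hbu, hbv]
    have hsum_lf : ∑ v ∈ Lf, G.degree v = 2 := by
      rw [hLfeq, Finset.sum_pair huv, (Finset.mem_filter.mp hu).2, (Finset.mem_filter.mp hv).2]
    have hLfcard : Lf.card = 2 := by rw [hLfeq, Finset.card_pair huv]
    have herase_card : (Lfᶜ.erase a).card = Lfᶜ.card - 1 := Finset.card_erase_of_mem haC
    have hsum_er : (Lfᶜ.erase a).card * 2 ≤ ∑ v ∈ Lfᶜ.erase a, G.degree v := by
      have := Finset.card_nsmul_le_sum (Lfᶜ.erase a) (fun v => G.degree v) 2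
        (fun v hv => hcompl_ge v (Finset.mem_of_mem_erase hv))
      simpa [smul_eq_mul] using this
    have hsplit_a : G.degree a + ∑ v ∈ Lfᶜ.erase a, G.degree v = ∑ v ∈ Lfᶜ, G.degree v :=
      Finset.add_sum_erase _ (fun v => G.degree v) haC
    have hdega : G.degree a = 2 := by
      have := hcompl_ge a haC
      omega
    -- same for b
    have herase_cardb : (Lfᶜ.erase b).card = Lfᶜ.card - 1 := Finset.card_erase_of_mem hbC
    have hsum_erb : (Lfᶜ.erase b).card * 2 ≤ ∑ v ∈ Lfᶜ.erase b, G.degree v := by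
      have := Finset.card_nsmul_le_sum (Lfᶜ.erase b) (fun v => G.degree v) 2
        (fun v hv => hcompl_ge v (Finset.mem_of_mem_erase hv))
      simpa [smul_eq_mul] using this
    have hsplit_b : G.degree b + ∑ v ∈ Lfᶜ.erase b, G.degree v = ∑ v ∈ Lfᶜ, G.degree v :=
      Finset.add_sum_erase _ (fun v => G.degree v) hbC
    have hdegb : G.degree b = 2 := by
      have := hcompl_ge b hbC
      omega
    have hub' : u ≠ b := hbu.symm
    have hva' : v ≠ a := hav.symm
    have hNa : G.neighborFinset a = {u, b} := by
      refine (Finset.eq_of_subset_of_card_le ?_ ?_).symm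
      · intro z hz
        simp only [Finset.mem_insert, Finset.mem_singleton] at hz
        rcases hz with rfl | rfl
        · exact (G.mem_neighborFinset a z).mpr ((hu_adj a).mpr rfl).symm
        · exact (G.mem_neighborFinset a z).mpr hab_adj
      · rw [Finset.card_pair hub']
        show G.degree a ≤ 2
        omega
    have hNb : G.neighborFinset b = {v, a} := by
      refine (Finset.eq_of_subset_of_card_le ?_ ?_).symm
      · intro z hz
        simp only [Finset.mem_insert, Finset.mem_singleton] at hz
        rcases hz with rfl | rfl
        · exact (G.mem_neighborFinset b z).mpr ((hv_adj b).mpr rfl).symm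
        · exact (G.mem_neighborFinset b z).mpr hab_adj.symm
      · rw [Finset.card_pair hva']
        show G.degree b ≤ 2
        omega
    obtain ⟨x, hx⟩ : ∃ x, x ∉ ({u, v, a, b} : Finset V) := by
      apply exists_notmem
      have h1 := Finset.card_insert_le u ({v, a, b} : Finset V)
      have h2 := Finset.card_insert_le v ({a, b} : Finset V)
      have h3 := Finset.card_insert_le a ({b} : Finset V)
      have h4 := Finset.card_singleton b
      omega
    have hclosed : ∀ p ∈ ({u, v, a, b} : Set V), ∀ q, G.Adj p q → q ∈ ({u, v, a, b} : Set V) := by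
      intro p hp q hq
      have hqmem := (G.mem_neighborFinset p q).mpr hq
      simp only [Set.mem_insert_iff, Set.mem_singleton_iff] at hp ⊢
      rcases hp with rfl | rfl | rfl | rfl
      · rw [hNu, Finset.mem_singleton] at hqmem; tauto
      · rw [hNv, Finset.mem_singleton] at hqmem; tauto
      · rw [hNa, Finset.mem_insert, Finset.mem_singleton] at hqmem; tauto
      · rw [hNb, Finset.mem_insert, Finset.mem_singleton] at hqmem; tauto
    obtain ⟨p⟩ := hG.preconnected u x
    have hxC := closed_walk_mem hclosed p (by left; rfl)
    simp only [Finset.mem_insert, Finset.mem_singleton, not_or] at hx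
    simp only [Set.mem_insert_iff, Set.mem_singleton_iff] at hxC
    tauto
  · -- a third leaf
    obtain ⟨w, hw, hwuv⟩ : ∃ w ∈ Lf, w ∉ ({u, v} : Finset V) := by
      rw [← Finset.not_subset]
      intro hsub
      have := Finset.card_le_card hsub
      rw [Finset.card_pair huv] at this
      omega
    simp only [Finset.mem_insert, Finset.mem_singleton, not_or] at hwuv
    obtain ⟨hwu, hwv⟩ := hwuv
    obtain ⟨e, hNw⟩ := leaf_nbr w hw
    by_cases hea : e = a
    · exact ⟨w, u, e, a, hwu, leaf_not_adj hG h5 hNw hNu hwu, hNw, hNu, Or.inl hea⟩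
    by_cases heb : e = b
    · exact ⟨w, v, e, b, hwv, leaf_not_adj hG h5 hNw hNv hwv, hNw, hNv, Or.inl heb⟩
    by_cases hae : G.Adj a e
    · by_cases hbe : G.Adj b e
      · -- triangle a b e
        exfalso
        apply hbr hab_adj
        have hh1 : (G.deleteEdges {s(a, b)}).Adj a e := by
          rw [SimpleGraph.deleteEdges_adj]
          refine ⟨hae, ?_⟩
          simp only [Set.mem_singleton_iff, Sym2.eq_iff]
          push_neg
          constructor
          · intro _; exact heb
          · intro h; exact absurd h hab_ne
        have hh2 : (G.deleteEdges {s(a, b)}).Adj e b := by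
          rw [SimpleGraph.deleteEdges_adj]
          refine ⟨hbe.symm, ?_⟩
          simp only [Set.mem_singleton_iff, Sym2.eq_iff]
          push_neg
          constructor
          · intro h; exact absurd h hea
          · intro h; exact absurd h heb
        exact ⟨SimpleGraph.Walk.cons hh1 (SimpleGraph.Walk.cons hh2 SimpleGraph.Walk.nil)⟩
      · exact ⟨v, w, b, e, Ne.symm hwv, leaf_not_adj hG h5 hNv hNw (Ne.symm hwv), hNv, hNw, Or.inr hbe⟩
    · exact ⟨u, w, a, e, Ne.symm hwu, leaf_not_adj hG h5 hNu hNw (Ne.symm hwu), hNu, hNw, Or.inr hae⟩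

/-- If `G` is a connected graph of order `n` with `5 ≤ n ≤ 7`, `rvd(G) = 1`
(i.e. `G` is a tree), and the complement `Ḡ` is connected, then
`rvd(Ḡ) ≥ n - 2`. -/
theorem rvd_compl_ge_of_tree_small {V : Type*} [Fintype V] (G : SimpleGraph V)
    (hG : G.Connected) (hGc : Gᶜ.Connected)
    (h5 : 5 ≤ Fintype.card V) (h7 : Fintype.card V ≤ 7) (h1 : G.rvd = 1) :
    Fintype.card V - 2 ≤ Gᶜ.rvd := by
  classical
  have hne : ∀ H : SimpleGraph V, {k | ∃ c : V → Fin k, H.IsRVDColoring c}.Nonempty :=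
    fun H => ⟨Fintype.card V, rvd_full_coloring H⟩
  have hmem : G.rvd ∈ {k | ∃ c : V → Fin k, G.IsRVDColoring c} := Nat.sInf_mem (hne G)
  rw [h1] at hmem
  obtain ⟨c1, hc1⟩ := hmem
  have hbr : ∀ ⦃x y : V⦄, G.Adj x y → ¬ (G.deleteEdges {s(x, y)}).Reachable x y := by
    intro x y hadj
    obtain ⟨S, hxS, hyS, _, h2⟩ := hc1 x y hadj.ne
    obtain ⟨hreach, hinj⟩ := h2 hadj
    have hS : S = ∅ := by
      rcases hinj with h | h
      · ext s
        simp only [Set.mem_empty_iff_false, iff_false]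
        intro hs
        have hsx : s = x :=
          h (Set.mem_union_left _ hs) (Set.mem_union_right _ rfl) (Subsingleton.elim _ _)
        exact hxS (hsx ▸ hs)
      · ext s
        simp only [Set.mem_empty_iff_false, iff_false]
        intro hs
        have hsy : s = y :=
          h (Set.mem_union_left _ hs) (Set.mem_union_right _ rfl) (Subsingleton.elim _ _)
        exact hyS (hsy ▸ hs)
    rw [hS, delVerts_empty'] at hreach
    exact hreach
  letI : DecidableRel G.Adj := Classical.decRel _
  obtain ⟨u, v, a, b, huv, hnadj, hNu, hNv, hab⟩ := exists_good_leaves hG hbr h5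
  have hu_adj : ∀ w, G.Adj u w ↔ w = a := fun w => by
    rw [← SimpleGraph.mem_neighborFinset, hNu, Finset.mem_singleton]
  have hv_adj : ∀ w, G.Adj v w ↔ w = b := fun w => by
    rw [← SimpleGraph.mem_neighborFinset, hNv, Finset.mem_singleton]
  refine le_csInf (hne Gᶜ) ?_
  rintro k ⟨c, hc⟩
  by_contra hk
  push_neg at hk
  obtain ⟨S, huS, hvS, _, h2⟩ := hc u v huv
  obtain ⟨hreach, hinj⟩ := h2 ((G.compl_adj u v).mpr ⟨huv, hnadj⟩)
  have hScard : S.ncard + 1 ≤ k := by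
    rcases hinj with h | h
    · calc S.ncard + 1 = (S ∪ {u}).ncard := by
            rw [Set.union_singleton, Set.ncard_insert_of_notMem huS]
      _ = (c '' (S ∪ {u})).ncard := (Set.ncard_image_of_injOn h).symm
      _ ≤ (Set.univ : Set (Fin k)).ncard :=
            Set.ncard_le_ncard (Set.subset_univ _) Set.finite_univ
      _ = k := by rw [Set.ncard_univ, Nat.card_eq_fintype_card, Fintype.card_fin]
    · calc S.ncard + 1 = (S ∪ {v}).ncard := by
            rw [Set.union_singleton, Set.ncard_insert_of_notMem hvS]
      _ = (c '' (S ∪ {v})).ncard := (Set.ncard_image_of_injOn h).symm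
      _ ≤ (Set.univ : Set (Fin k)).ncard :=
            Set.ncard_le_ncard (Set.subset_univ _) Set.finite_univ
      _ = k := by rw [Set.ncard_univ, Nat.card_eq_fintype_card, Fintype.card_fin]
  have hT : 1 < ((S ∪ {u, v})ᶜ : Set V).ncard := by
    have h1' : (S ∪ {u, v} : Set V).ncard ≤ S.ncard + 2 := by
      refine le_trans (Set.ncard_union_le _ _) ?_
      have hp : ({u, v} : Set V).ncard ≤ 2 := by
        have := Set.ncard_insert_le u ({v} : Set V)
        have h2' := Set.ncard_singleton v
        omega
      omega
    have h2' : (S ∪ {u, v} : Set V).ncard + ((S ∪ {u, v})ᶜ : Set V).ncard = Fintype.card V := by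
      rw [Set.ncard_add_ncard_compl, Nat.card_eq_fintype_card]
    omega
  obtain ⟨w1, hw1, w2, hw2, hww⟩ := (Set.one_lt_ncard (Set.toFinite _)).mp hT
  simp only [Set.mem_compl_iff, Set.mem_union, Set.mem_insert_iff, Set.mem_singleton_iff,
    not_or] at hw1 hw2
  obtain ⟨hw1S, hw1u, hw1v⟩ := hw1
  obtain ⟨hw2S, hw2u, hw2v⟩ := hw2
  have hadjK : ∀ p q : V, ¬ G.Adj p q → p ≠ q → p ∉ S → q ∉ S → s(p, q) ≠ s(u, v) →
      ((Gᶜ.deleteEdges {s(u, v)}).delVerts S).Adj p q := by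
    intro p q h1' h2' h3' h4' h5'
    refine ⟨?_, h3', h4'⟩
    rw [SimpleGraph.deleteEdges_adj]
    exact ⟨(G.compl_adj p q).mpr ⟨h2', h1'⟩, by simpa using h5'⟩
  have mid : ∀ w, w ∉ S → w ≠ u → w ≠ v → w ≠ a → w ≠ b → False := by
    intro w h1' h2' h3' h4' h5'
    apply hreach
    refine ⟨SimpleGraph.Walk.cons (hadjK u w ?_ ?_ huS h1' ?_)
      (SimpleGraph.Walk.cons (hadjK w v ?_ ?_ h1' hvS ?_) SimpleGraph.Walk.nil)⟩
    · exact fun h => h4' ((hu_adj w).mp h)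
    · exact h2'.symm
    · simp only [ne_eq, Sym2.eq_iff]
      push_neg
      exact ⟨fun _ => h3', fun h => absurd h huv⟩
    · exact fun h => h5' ((hv_adj w).mp h.symm)
    · exact h3'
    · simp only [ne_eq, Sym2.eq_iff]
      push_neg
      exact ⟨fun h => absurd h h2', fun _ h => absurd h.symm huv⟩
  have chain : a ∉ S → a ≠ u → a ≠ v → b ∉ S → b ≠ u → b ≠ v → False := by
    intro haS hau hav hbS hbu hbv
    have hab_ne : a ≠ b := by
      intro h
      -- a = b : then w1 or w2 differs from a, use mid
      rcases eq_or_ne w1 a with h1 | h1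
      · refine mid w2 hw2S hw2u hw2v ?_ ?_
        · intro h2; exact hww (h1.trans h2.symm)
        · intro h2; exact hww (h1.trans (h.trans h2.symm))
      · exact mid w1 hw1S hw1u hw1v h1 (fun hh => h1 (hh.trans h.symm))
    have hnab : ¬ G.Adj a b := hab.resolve_left hab_ne
    apply hreach
    refine ⟨SimpleGraph.Walk.cons (hadjK u b ?_ ?_ huS hbS ?_)
      (SimpleGraph.Walk.cons (hadjK b a ?_ ?_ hbS haS ?_)
        (SimpleGraph.Walk.cons (hadjK a v ?_ ?_ haS hvS ?_) SimpleGraph.Walk.nil))⟩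
    · exact fun h => hab_ne ((hu_adj b).mp h).symm
    · exact hbu.symm
    · simp only [ne_eq, Sym2.eq_iff]
      push_neg
      exact ⟨fun _ => hbv, fun h => absurd h huv⟩
    · exact fun h => hnab h.symm
    · exact fun h => hab_ne h.symm
    · simp only [ne_eq, Sym2.eq_iff]
      push_neg
      exact ⟨fun h => absurd h hbu, fun h => absurd h hbv⟩
    · exact fun h => hab_ne ((hv_adj a).mp h.symm)
    · exact hav
    · simp only [ne_eq, Sym2.eq_iff]
      push_neg
      exact ⟨fun h => absurd h hau, fun h => absurd h hav⟩
  by_cases hw1ab : w1 ≠ a ∧ w1 ≠ b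
  · exact mid w1 hw1S hw1u hw1v hw1ab.1 hw1ab.2
  by_cases hw2ab : w2 ≠ a ∧ w2 ≠ b
  · exact mid w2 hw2S hw2u hw2v hw2ab.1 hw2ab.2
  push_neg at hw1ab hw2ab
  have resolve : ∀ x y : V, x ∉ S → x ≠ u → x ≠ v → y ∉ S → y ≠ u → y ≠ v →
      x = a → y = b → False := by
    intro x y hxS hxu hxv hyS hyu hyv hxa hyb
    subst hxa
    subst hyb
    exact chain hxS hxu hxv hyS hyu hyv
  by_cases h1a : w1 = a
  · have h2b : w2 = b := by
      by_contra hc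
      have h2a : w2 = a := by
        by_contra hc2
        exact hc (hw2ab hc2)
      exact hww (h1a.trans h2a.symm)
    exact resolve w1 w2 hw1S hw1u hw1v hw2S hw2u hw2v h1a h2b
  · have h1b : w1 = b := hw1ab h1a
    have h2a : w2 = a := by
      by_contra hc
      have h2b : w2 = b := hw2ab hc
      exact hww (h1b.trans h2b.symm)
    exact resolve w2 w1 hw2S hw2u hw2v hw1S hw1u hw1v h2a h1b
end

section
/- Let G be a connected simple graph of order n with rvd(G) = 2 and such that the complement Ḡ is connected. Then rvd(Ḡ) ≥ n−3. -/
open SimpleGraph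

namespace RVDwork

open SimpleGraph Walk

variable {V : Type*}

lemma delVerts_adj {G : SimpleGraph V} {S : Set V} {u v : V} :
    (G.delVerts S).Adj u v ↔ G.Adj u v ∧ u ∉ S ∧ v ∉ S := Iff.rfl

/-- Transfer a walk avoiding `S` and `E` into the pruned graph. -/
lemma reach_prune {G H : SimpleGraph V} (hHG : ∀ a b, H.Adj a b → G.Adj a b)
    {S : Set V} {E : Set (Sym2 V)} :
    ∀ {u v : V} (P : H.Walk u v), (∀ x ∈ P.support, x ∉ S) →
      (∀ e ∈ P.edges, e ∉ E) → ((G.deleteEdges E).delVerts S).Reachable u v := by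
  intro u v P
  induction P with
  | nil => exact fun _ _ => Reachable.refl _
  | @cons a b w h p ih =>
      intro hs he
      have h1 : ((G.deleteEdges E).delVerts S).Adj a b := by
        refine ⟨(deleteEdges_adj).2 ⟨hHG _ _ h, he _ (by simp)⟩, hs _ (by simp), ?_⟩
        exact hs _ (by simp [Walk.support_cons])
      exact (h1.reachable).trans
        (ih (fun x hx => hs x (by simp [Walk.support_cons, hx]))
            (fun e heq => he e (by simp [Walk.edges_cons, heq])))

/-- version without edge deletion -/
lemma reach_prune' {G H : SimpleGraph V} (hHG : ∀ a b, H.Adj a b → G.Adj a b)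
    {S : Set V} {u v : V} (P : H.Walk u v) (hs : ∀ x ∈ P.support, x ∉ S) :
    (G.delVerts S).Reachable u v := by
  have := reach_prune (E := (∅ : Set (Sym2 V))) hHG P hs (by simp)
  rwa [SimpleGraph.deleteEdges_empty] at this

lemma no_reach_isolate {H : SimpleGraph V} {x y : V} (hxy : ¬H.Adj x y) (hne : x ≠ y) :
    ¬ (H.delVerts ({x, y} : Set V)ᶜ).Reachable x y := by
  intro hr
  obtain ⟨P⟩ := hr
  cases P with
  | nil => exact hne rfl
  | @cons a b w h p =>
      rcases h with ⟨hadj, -, hb⟩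
      rcases (not_not.mp hb) with rfl | rfl
      · exact H.loopless.irrefl _ hadj
      · exact hxy hadj

/-- Any graph on a finite nonempty vertex type admits an RVD coloring with `card V` colors. -/
lemma univ_coloring (H : SimpleGraph V) [Fintype V] :
    ∃ c : V → Fin (Fintype.card V), H.IsRVDColoring c := by
  refine ⟨fun v => (Fintype.equivFin V) v, ?_⟩
  intro x y hne
  refine ⟨({x, y} : Set V)ᶜ, by simp, by simp, ?_, ?_⟩
  · intro hadj
    exact ⟨no_reach_isolate hadj hne, fun a _ b _ h => (Fintype.equivFin V).injective h⟩
  · intro hadj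
    refine ⟨?_, Or.inl (fun a _ b _ h => (Fintype.equivFin V).injective h)⟩
    have : ¬ (H.deleteEdges {s(x, y)}).Adj x y := by simp
    exact no_reach_isolate this hne

lemma injOn_ncard {k : ℕ} {S : Set V} {c : V → Fin k} [Fintype V] (h : Set.InjOn c S) :
    S.ncard ≤ k := by
  classical
  have h1 : S.ncard = (c '' S).ncard := (Set.ncard_image_of_injOn h).symm
  have h2 : (c '' S).ncard ≤ (Set.univ : Set (Fin k)).ncard :=
    Set.ncard_le_ncard (Set.subset_univ _) Set.finite_univ
  simpa [Set.ncard_univ, h1] using h2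

/-- A simple path between `u` and `v` containing the edge `s(u,v)` has length 1. -/
lemma path_edge_mem {H : SimpleGraph V} : ∀ {u v : V} (P : H.Walk u v), P.IsPath →
    s(u, v) ∈ P.edges → P.length = 1 := by
  intro u v P
  induction P with
  | nil => simp
  | @cons a b w h p ih =>
      intro hP he
      rw [Walk.edges_cons, List.mem_cons] at he
      rcases he with h1 | h1
      · rw [Sym2.eq_iff] at h1
        rcases h1 with ⟨-, rfl⟩ | ⟨rfl, rfl⟩
        · have : p = Walk.nil := (Walk.isPath_iff_eq_nil (p := p)).1 hP.of_cons
          subst this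
          simp
        · exact absurd h (H.loopless.irrefl _)
      · exfalso
        have ha : a ∈ p.support := Walk.fst_mem_support_of_mem_edges p h1
        exact ((Walk.cons_isPath_iff h p).1 hP).2 ha


/-- two internally disjoint paths avoiding the edge beat a `≤ 1` separator -/
lemma kill2 [Fintype V] {G H : SimpleGraph V} (hHG : ∀ a b, H.Adj a b → G.Adj a b)
    {S : Set V} {c₁ c₂ : V}
    (hS : S.ncard ≤ 1) (hc₁ : c₁ ∉ S) (hc₂ : c₂ ∉ S)
    (hsep : ¬ ((G.deleteEdges {s(c₁, c₂)}).delVerts S).Reachable c₁ c₂)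
    (P₁ P₂ : H.Walk c₁ c₂)
    (he₁ : s(c₁, c₂) ∉ P₁.edges) (he₂ : s(c₁, c₂) ∉ P₂.edges)
    (hdisj : ∀ t, t ∈ P₁.support → t ∈ P₂.support → t = c₁ ∨ t = c₂) : False := by
  rcases S.eq_empty_or_nonempty with rfl | ⟨t, ht⟩
  · exact hsep (reach_prune hHG P₁ (by simp) (by intro e he hee; rw [Set.mem_singleton_iff] at hee; exact he₁ (hee ▸ he)))
  · have hsingle : ∀ x ∈ S, x = t := by
      intro x hx
      by_contra hxt
      have h2 : ({x, t} : Set V) ⊆ S := by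
        intro z hz; rcases hz with rfl | rfl
        · exact hx
        · exact ht
      have := Set.ncard_le_ncard h2 (Set.toFinite S)
      rw [Set.ncard_pair hxt] at this
      omega
    by_cases h1 : t ∈ P₁.support
    · by_cases h2 : t ∈ P₂.support
      · rcases hdisj t h1 h2 with rfl | rfl
        · exact hc₁ ht
        · exact hc₂ ht
      · refine hsep (reach_prune hHG P₂ ?_ ?_)
        · intro x hx hxS
          exact h2 ((hsingle x hxS) ▸ hx)
        · intro e he hee; rw [Set.mem_singleton_iff] at hee; exact he₂ (hee ▸ he)
    · refine hsep (reach_prune hHG P₁ ?_ ?_)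
      · intro x hx hxS
        exact h1 ((hsingle x hxS) ▸ hx)
      · intro e he hee; rw [Set.mem_singleton_iff] at hee; exact he₁ (hee ▸ he)

/-- three pairwise internally disjoint paths beat a `≤ 2` separator -/
lemma kill3 [Fintype V] {G H : SimpleGraph V} (hHG : ∀ a b, H.Adj a b → G.Adj a b)
    {S : Set V} {c₁ c₂ : V}
    (hS : S.ncard ≤ 2) (hc₁ : c₁ ∉ S) (hc₂ : c₂ ∉ S)
    (hsep : ¬ (G.delVerts S).Reachable c₁ c₂)
    (P₁ P₂ P₃ : H.Walk c₁ c₂)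
    (h12 : ∀ t, t ∈ P₁.support → t ∈ P₂.support → t = c₁ ∨ t = c₂)
    (h13 : ∀ t, t ∈ P₁.support → t ∈ P₃.support → t = c₁ ∨ t = c₂)
    (h23 : ∀ t, t ∈ P₂.support → t ∈ P₃.support → t = c₁ ∨ t = c₂) : False := by
  have hhit : ∀ P : H.Walk c₁ c₂, ∃ t ∈ S, t ∈ P.support := by
    intro P
    by_contra hP
    push_neg at hP
    exact hsep (reach_prune' hHG P (fun x hx hxS => hP x hxS hx))
  obtain ⟨t₁, ht₁S, ht₁⟩ := hhit P₁
  obtain ⟨t₂, ht₂S, ht₂⟩ := hhit P₂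
  obtain ⟨t₃, ht₃S, ht₃⟩ := hhit P₃
  have hne12 : t₁ ≠ t₂ := by
    intro h; subst h
    rcases h12 t₁ ht₁ ht₂ with rfl | rfl
    · exact hc₁ ht₁S
    · exact hc₂ ht₁S
  have hne13 : t₁ ≠ t₃ := by
    intro h; subst h
    rcases h13 t₁ ht₁ ht₃ with rfl | rfl
    · exact hc₁ ht₁S
    · exact hc₂ ht₁S
  have hne23 : t₂ ≠ t₃ := by
    intro h; subst h
    rcases h23 t₂ ht₂ ht₃ with rfl | rfl
    · exact hc₁ ht₂S
    · exact hc₂ ht₂S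
  have hsub : ({t₁, t₂, t₃} : Set V) ⊆ S := by
    intro z hz
    rcases hz with rfl | rfl | rfl
    · exact ht₁S
    · exact ht₂S
    · exact ht₃S
  have h3 : ({t₁, t₂, t₃} : Set V).ncard = 3 := by
    rw [Set.ncard_insert_of_notMem (by simp [hne12, hne13]) (Set.toFinite _),
      Set.ncard_pair hne23]
  have := Set.ncard_le_ncard hsub (Set.toFinite S)
  omega

/-- cycle existence in a graph where every vertex adjacent to something has degree ≥ 2 -/
lemma cycex [Fintype V] {H : SimpleGraph V}
    (hdeg : ∀ a b : V, H.Adj a b → 2 ≤ (H.neighborSet b).ncard)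
    {v₀ w₀ : V} (h₀ : H.Adj v₀ w₀) :
    ∃ (c : V) (C : H.Walk c c), C.IsCycle := by
  classical
  suffices aux : ∀ (k : ℕ) {a b : V} (P : H.Walk a b), P.IsPath → a ≠ b → 1 ≤ P.length →
      Fintype.card V ≤ k + P.length → ∃ (c : V) (C : H.Walk c c), C.IsCycle by
    refine aux (Fintype.card V) (Walk.cons h₀ Walk.nil) ?_ h₀.ne (by simp) (by omega)
    rw [Walk.isPath_def]
    simp [h₀.ne]
  intro k
  induction k with
  | zero =>
      intro a b P hP hab hlen hcard
      have := hP.length_lt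
      omega
  | succ k ih =>
      intro a b P hP hab hlen hcard
      -- the predecessor of b on P
      set w₁ := P.getVert (P.length - 1) with hw₁
      have hbw₁ : H.Adj w₁ b := by
        have h1 : P.length - 1 < P.length := by omega
        have := P.adj_getVert_succ h1
        have h2 : P.length - 1 + 1 = P.length := by omega
        rw [h2, P.getVert_length] at this
        exact this
      -- pick another neighbor of b
      have hns : ¬ (H.neighborSet b ⊆ {w₁}) := by
        intro hsub
        have h1 := Set.ncard_le_ncard hsub (Set.finite_singleton _)
        rw [Set.ncard_singleton] at h1
        have := hdeg w₁ b hbw₁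
        omega
      obtain ⟨w, hw, hww₁⟩ := Set.not_subset.1 hns
      rw [Set.mem_singleton_iff] at hww₁
      have hbw : H.Adj b w := hw
      by_cases hmem : w ∈ P.support
      · -- found a cycle
        set D := P.dropUntil w hmem with hDdef
        have hDpath : D.IsPath := hP.dropUntil hmem
        have hDedge : s(b, w) ∉ D.edges := by
          intro hin
          have h1 : D.reverse.length = 1 := by
            refine path_edge_mem D.reverse hDpath.reverse ?_
            rw [Walk.edges_reverse, List.mem_reverse]
            exact hin
          rw [Walk.length_reverse] at h1
          -- then w = w₁, contradiction
          apply hww₁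
          have hsplit := P.take_spec hmem
          set T := P.takeUntil w hmem with hTdef
          have hPlen : P.length = T.length + D.length := by
            conv_lhs => rw [← hsplit]
            rw [Walk.length_append]
          set i := P.length - 1 with hidef
          have hlt : ¬ (i < T.length) := by omega
          have h5 : P.getVert i = D.getVert (i - T.length) := by
            conv_lhs => rw [← hsplit]
            rw [Walk.getVert_append, if_neg hlt]
          have h6 : i - T.length = 0 := by omega
          rw [hw₁, h5, h6, Walk.getVert_zero]
        have hcyc : (Walk.cons hbw D).IsCycle := by
          rw [Walk.cons_isCycle_iff]
          exact ⟨hDpath, hDedge⟩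
        exact ⟨b, _, hcyc⟩
      · -- extend the path
        have hP' : (P.concat hbw).IsPath := by
          have h1 : (P.concat hbw).reverse = Walk.cons hbw.symm P.reverse := by
            rw [Walk.reverse_concat]
          have h2 : (Walk.cons hbw.symm P.reverse).IsPath := by
            rw [Walk.cons_isPath_iff]
            refine ⟨hP.reverse, ?_⟩
            rw [Walk.support_reverse, List.mem_reverse]
            exact hmem
          have := h2
          rw [← h1] at this
          rwa [Walk.isPath_reverse_iff] at this
        refine ih (P.concat hbw) hP' ?_ ?_ ?_
        · intro h; subst h; exact hmem P.start_mem_support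
        · rw [Walk.length_concat]; omega
        · rw [Walk.length_concat]; omega


/-- splitting a cycle at a vertex into two internally disjoint arcs -/
lemma cycle_split [DecidableEq V] {H : SimpleGraph V} {c₁ c₂ : V} (C : H.Walk c₁ c₁)
    (hC : C.IsCycle) (hm : c₂ ∈ C.support) (hne : c₂ ≠ c₁) :
    (C.takeUntil c₂ hm).IsPath ∧ (C.dropUntil c₂ hm).IsPath ∧
    (∀ t, t ∈ (C.takeUntil c₂ hm).support → t ∈ (C.dropUntil c₂ hm).support →
        t = c₁ ∨ t = c₂) ∧
    (C.takeUntil c₂ hm).length + (C.dropUntil c₂ hm).length = C.length := by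
  set T := C.takeUntil c₂ hm with hT
  set D := C.dropUntil c₂ hm with hD
  have hspec : T.append D = C := C.take_spec hm
  have hsupp : T.support ++ D.support.tail = C.support := by
    rw [← Walk.support_append, hspec]
  have hCnodup : C.support.tail.Nodup := hC.support_nodup
  have hTc : T.support = c₁ :: T.support.tail := T.support_eq_cons
  have htails : T.support.tail ++ D.support.tail = C.support.tail := by
    have h1 : c₁ :: (T.support.tail ++ D.support.tail) = c₁ :: C.support.tail := by
      rw [← List.cons_append, ← hTc, hsupp, ← C.support_eq_cons]
    exact (List.cons.inj h1).2
  have hnod : (T.support.tail ++ D.support.tail).Nodup := htails ▸ hCnodup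
  rw [List.nodup_append] at hnod
  obtain ⟨hnodT, hnodD, hdisj⟩ := hnod
  have hc₁D : c₁ ∈ D.support.tail := Walk.end_mem_tail_support_of_ne hne D
  have hc₂T : c₂ ∈ T.support.tail := Walk.end_mem_tail_support_of_ne (Ne.symm hne) T
  have hTpath : T.IsPath := by
    rw [Walk.isPath_def, hTc, List.nodup_cons]
    exact ⟨fun hmem => hdisj _ hmem _ hc₁D rfl, hnodT⟩
  have hDc : D.support = c₂ :: D.support.tail := D.support_eq_cons
  have hDpath : D.IsPath := by
    rw [Walk.isPath_def, hDc, List.nodup_cons]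
    exact ⟨fun hmem => hdisj _ hc₂T _ hmem rfl, hnodD⟩
  refine ⟨hTpath, hDpath, ?_, ?_⟩
  · intro t htT htD
    rw [hTc, List.mem_cons] at htT
    rw [hDc, List.mem_cons] at htD
    rcases htT with rfl | htT
    · exact Or.inl rfl
    rcases htD with rfl | htD
    · exact Or.inr rfl
    exact absurd rfl (hdisj _ htT _ htD)
  · rw [← hspec, Walk.length_append]

lemma closed_end_mem_tail {H : SimpleGraph V} {c : V} (C : H.Walk c c) (hnil : ¬ C.Nil) :
    c ∈ C.support.tail := by
  cases C with
  | nil => simp at hnil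
  | cons h p => simpa using p.end_mem_support

lemma mem_support_rotate [DecidableEq V] {H : SimpleGraph V} {c u : V} (C : H.Walk c c)
    (hC : C.IsCycle) (hu : u ∈ C.support) {x : V} :
    (x ∈ (C.rotate u hu).support ↔ x ∈ C.support) := by
  have hrot := Walk.support_rotate C u hu
  have h1 : ¬ C.Nil := hC.not_nil
  have h2 : ¬ (C.rotate u hu).Nil := (hC.rotate hu).not_nil
  constructor
  · intro hx
    rw [Walk.mem_support_iff] at hx
    rcases hx with rfl | hx
    · exact hu
    · have := hrot.mem_iff.1 hx
      exact List.mem_of_mem_tail this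
  · intro hx
    rw [Walk.mem_support_iff] at hx
    rcases hx with rfl | hx
    · have : x ∈ C.support.tail := closed_end_mem_tail C h1
      have := hrot.mem_iff.2 this
      exact List.mem_of_mem_tail this
    · have := hrot.mem_iff.2 hx
      exact List.mem_of_mem_tail this

/-- support of a walk in a vertex-deleted graph -/
lemma delVerts_walk_support {G : SimpleGraph V} {A : Set V} :
    ∀ {u v : V} (P : (G.delVerts A).Walk u v) (x : V), x ∈ P.support → x = v ∨ x ∉ A := by
  intro u v P
  induction P with
  | nil => intro x hx; simp at hx; exact Or.inl hx
  | @cons a b w h p ih =>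
      intro x hx
      rw [Walk.support_cons, List.mem_cons] at hx
      rcases hx with rfl | hx
      · exact Or.inr h.2.1
      · exact ih x hx

/-- a walk in one vertex-deleted graph transfers to another if its support avoids `B` -/
lemma delVerts_walk_mono {G : SimpleGraph V} {A B : Set V} :
    ∀ {u v : V} (P : (G.delVerts A).Walk u v), (∀ x ∈ P.support, x ∉ B) →
      ∃ Q : (G.delVerts B).Walk u v, Q.support = P.support := by
  intro u v P
  induction P with
  | nil => intro _; exact ⟨Walk.nil, rfl⟩
  | @cons a b w h p ih =>
      intro hs
      obtain ⟨Q, hQ⟩ := ih (fun x hx => hs x (by simp [Walk.support_cons, hx]))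
      refine ⟨Walk.cons ⟨h.1, hs a (by simp), hs b (by simp [Walk.support_cons])⟩ Q, ?_⟩
      rw [Walk.support_cons]; exact congrArg (List.cons a) hQ

/-- first exit of a walk from a set of vertices -/
lemma first_exit {H : SimpleGraph V} {CS : Set V} :
    ∀ {u v : V} (P : H.Walk u v), u ∈ CS → v ∉ CS →
      ∃ c₁ ∈ CS, ∃ w, w ∉ CS ∧ H.Adj c₁ w := by
  intro u v P
  induction P with
  | nil => intro h1 h2; exact absurd h1 h2
  | @cons a b w h p ih =>
      intro h1 h2
      by_cases hb : b ∈ CS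
      · exact ih hb h2
      · exact ⟨a, h1, b, hb, h⟩

/-- first hit of a walk into a set of vertices -/
lemma first_hit {H : SimpleGraph V} {CS : Set V} :
    ∀ {u v : V} (P : H.Walk u v), u ∉ CS → v ∈ CS →
      ∃ c₂ ∈ CS, ∃ R : H.Walk u c₂, (∀ x ∈ R.support, x = c₂ ∨ x ∉ CS) ∧
        (∀ x ∈ R.support, x ∈ P.support) := by
  intro u v P
  induction P with
  | nil => intro h1 h2; exact absurd h2 h1
  | @cons a b w h p ih =>
      intro h1 h2
      by_cases hb : b ∈ CS
      · refine ⟨b, hb, Walk.cons h Walk.nil, ?_, ?_⟩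
        · intro x hx
          rw [Walk.support_cons] at hx
          simp only [Walk.support_nil, List.mem_cons, List.mem_singleton] at hx
          rcases hx with rfl | rfl | h'
          · exact Or.inr h1
          · exact Or.inl rfl
          · simp at h'
        · intro x hx
          rw [Walk.support_cons] at hx
          simp only [Walk.support_nil, List.mem_cons, List.mem_singleton] at hx
          rw [Walk.support_cons, List.mem_cons]
          rcases hx with rfl | rfl | h'
          · exact Or.inl rfl
          · exact Or.inr p.start_mem_support
          · simp at h'
      · obtain ⟨c₂, hc₂, R, hR1, hR2⟩ := ih hb h2
        refine ⟨c₂, hc₂, Walk.cons h R, ?_, ?_⟩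
        · intro x hx
          rw [Walk.support_cons, List.mem_cons] at hx
          rcases hx with rfl | hx
          · exact Or.inr h1
          · exact hR1 x hx
        · intro x hx
          rw [Walk.support_cons, List.mem_cons] at hx
          rw [Walk.support_cons, List.mem_cons]
          rcases hx with rfl | hx
          · exact Or.inl rfl
          · exact Or.inr (hR2 x hx)


def Form1 (G : SimpleGraph V) : Prop :=
  ∃ x y : V, x ≠ y ∧ ¬ G.Adj x y ∧
    ((G.neighborSet x ∪ G.neighborSet y) \ {x, y}).ncard ≤ 2

def Form2 (G : SimpleGraph V) : Prop :=
  ∃ x y v : V, G.Adj x y ∧ G.neighborSet x = {y, v} ∧ G.neighborSet y = {x, v}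

def Form3 (G : SimpleGraph V) : Prop :=
  ∃ x y a b : V, G.Adj x y ∧ G.neighborSet x = {y, a} ∧ G.neighborSet y = {x, b} ∧
    a ≠ y ∧ b ≠ x ∧ a ≠ b ∧ ¬ G.Adj a b

lemma hu_adj {G : SimpleGraph V} {U : Set V} {a b : V} :
    (G.delVerts Uᶜ).Adj a b ↔ G.Adj a b ∧ a ∈ U ∧ b ∈ U := by
  show G.Adj a b ∧ a ∉ Uᶜ ∧ b ∉ Uᶜ ↔ _
  simp

lemma nbr_pair [Fintype V] {H : SimpleGraph V} {u a b : V}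
    (hc : (H.neighborSet u).ncard ≤ 2)
    (ha : H.Adj u a) (hb : H.Adj u b) (hab : a ≠ b) : H.neighborSet u = {a, b} := by
  have hsub : ({a, b} : Set V) ⊆ H.neighborSet u := by
    intro z hz
    rcases hz with rfl | rfl
    · exact ha
    · exact hb
  refine (Set.eq_of_subset_of_ncard_le hsub ?_ (Set.toFinite _)).symm
  rw [Set.ncard_pair hab]
  exact hc

lemma adj_of_length_one {H : SimpleGraph V} {u v : V} (W : H.Walk u v)
    (h : W.length = 1) : H.Adj u v := by
  cases W with
  | nil => simp at h
  | cons hadj p =>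
      rw [Walk.length_cons] at h
      have : p.length = 0 := by omega
      have := p.eq_of_length_eq_zero this
      subst this
      exact hadj


/-- Extraction of a "form" from a cycle all of whose vertices have degree ≤ 2
in the restricted graph. -/
lemma formfind [Fintype V] {G : SimpleGraph V} {U : Set V} {r : V}
    (hNH : ∀ u ∈ U, u ≠ r → (G.delVerts Uᶜ).neighborSet u = G.neighborSet u)
    (hdegle : ∀ u ∈ U, ((G.delVerts Uᶜ).neighborSet u).ncard ≤ 2)
    {c₀ : V} (C₀ : (G.delVerts Uᶜ).Walk c₀ c₀)
    (hC₀ : C₀.IsCycle) (hbase : r ∉ C₀.support ∨ c₀ = r)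
    (hsupU : ∀ x ∈ C₀.support, x ∈ U) :
    Form1 G ∨ Form2 G ∨ Form3 G := by
  classical
  have hGadj : ∀ {a b : V}, (G.delVerts Uᶜ).Adj a b → G.Adj a b := fun h => (hu_adj.1 h).1
  have hpair : ∀ x a b : V, x ∈ U → x ≠ r → (G.delVerts Uᶜ).Adj x a →
      (G.delVerts Uᶜ).Adj x b → a ≠ b → G.neighborSet x = {a, b} := by
    intro x a b hxU hxr ha hb hab
    rw [← hNH x hxU hxr]
    exact nbr_pair (hdegle x hxU) ha hb hab
  have hnadj : ∀ x a b y : V, G.neighborSet x = {a, b} → y ≠ a → y ≠ b → ¬ G.Adj x y := by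
    intro x a b y hN hya hyb hadj
    have : y ∈ G.neighborSet x := hadj
    rw [hN] at this
    rcases this with h | h
    · exact hya h
    · exact hyb h
  revert hC₀ hbase hsupU
  cases C₀ with
  | nil =>
      intro hC₀ _ _
      exact absurd hC₀ Walk.IsCycle.not_of_nil
  | @cons _ x₁ _ h₁ p₁ =>
    cases p₁ with
    | nil =>
        intro hC₀ _ _
        have := hC₀.three_le_length; simp at this
    | @cons _ x₂ _ h₂ p₂ =>
      cases p₂ with
      | nil =>
          intro hC₀ _ _
          have := hC₀.three_le_length; simp at this
      | @cons _ x₃ _ h₃ p₃ =>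
        cases p₃ with
        | nil =>
            -- triangle c₀ x₁ x₂  (x₃ = c₀ forced by walk type)
            intro hC₀ hbase hsupU
            have hnd := hC₀.support_nodup
            simp only [Walk.support_cons, Walk.support_nil, List.tail_cons, List.nodup_cons,
              List.mem_cons, List.mem_singleton, List.not_mem_nil, or_false, List.nodup_nil,
              not_or, and_true] at hnd
            obtain ⟨⟨h12, h10⟩, h20, -⟩ := hnd
            have hx₁U : x₁ ∈ U := hsupU x₁ (by simp)
            have hx₂U : x₂ ∈ U := hsupU x₂ (by simp)
            have hner : ∀ x : V, x ∈ (Walk.cons h₁ (Walk.cons h₂ (Walk.cons h₃ Walk.nil))).support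
                → x ≠ c₀ → x ≠ r := by
              intro x hx hxc
              rcases hbase with h | h
              · intro hh; exact h (hh ▸ hx)
              · exact h ▸ hxc
            refine Or.inr (Or.inl ⟨x₁, x₂, c₀, hGadj h₂, ?_, ?_⟩)
            · exact hpair x₁ x₂ c₀ hx₁U (hner x₁ (by simp) h10) h₂ h₁.symm h20
            · exact hpair x₂ x₁ c₀ hx₂U (hner x₂ (by simp) h20) h₂.symm h₃ h10
        | @cons _ x₄ _ h₄ p₄ =>
          cases p₄ with
          | nil =>
              -- 4-cycle c₀ x₁ x₂ x₃
              intro hC₀ hbase hsupU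
              have hnd := hC₀.support_nodup
              simp only [Walk.support_cons, Walk.support_nil, List.tail_cons, List.nodup_cons,
                List.mem_cons, List.mem_singleton, List.not_mem_nil, or_false, List.nodup_nil,
                not_or, and_true] at hnd
              obtain ⟨⟨h12, h13, h10⟩, ⟨h23, h20⟩, h30, -⟩ := hnd
              have hner : ∀ x : V,
                  x ∈ (Walk.cons h₁ (Walk.cons h₂ (Walk.cons h₃ (Walk.cons h₄ Walk.nil)))).support
                  → x ≠ c₀ → x ≠ r := by
                intro x hx hxc
                rcases hbase with h | h
                · intro hh; exact h (hh ▸ hx)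
                · exact h ▸ hxc
              have hN1 : G.neighborSet x₁ = {c₀, x₂} :=
                hpair x₁ c₀ x₂ (hsupU x₁ (by simp)) (hner x₁ (by simp) h10) h₁.symm h₂
                  (Ne.symm h20)
              have hN3 : G.neighborSet x₃ = {x₂, c₀} :=
                hpair x₃ x₂ c₀ (hsupU x₃ (by simp)) (hner x₃ (by simp) h30) h₃.symm h₄ h20
              refine Or.inl ⟨x₁, x₃, h13, hnadj x₁ c₀ x₂ x₃ hN1 h30 (Ne.symm h23), ?_⟩
              have hsub : (G.neighborSet x₁ ∪ G.neighborSet x₃) \ {x₁, x₃} ⊆ {c₀, x₂} := by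
                intro z hz
                rcases hz.1 with h | h
                · rw [hN1] at h; exact h
                · rw [hN3] at h
                  rcases h with h | h
                  · exact Or.inr h
                  · exact Or.inl h
              have h5 := Set.ncard_le_ncard hsub (Set.toFinite _)
              have h6 : ({c₀, x₂} : Set V).ncard ≤ 2 := by
                refine le_trans (Set.ncard_insert_le _ _) ?_
                simp
              omega
          | @cons _ x₅ _ h₅ p₅ =>
              -- length ≥ 5 : c₀ x₁ x₂ x₃ x₄ x₅ ...
              intro hC₀ hbase hsupU
              have hnd := hC₀.support_nodup
              simp only [Walk.support_cons, List.tail_cons, List.nodup_cons, List.mem_cons,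
                not_or] at hnd
              obtain ⟨⟨h12, h13, h14, h1p⟩, ⟨h23, h24, h2p⟩, ⟨h34, h3p⟩, h4p, -⟩ := hnd
              have hc₀p : c₀ ∈ p₅.support := p₅.end_mem_support
              have h10 : x₁ ≠ c₀ := fun h => h1p (h ▸ hc₀p)
              have h20 : x₂ ≠ c₀ := fun h => h2p (h ▸ hc₀p)
              have h30 : x₃ ≠ c₀ := fun h => h3p (h ▸ hc₀p)
              have h40 : x₄ ≠ c₀ := fun h => h4p (h ▸ hc₀p)
              have hner : ∀ x : V,
                  x ∈ (Walk.cons h₁ (Walk.cons h₂ (Walk.cons h₃ (Walk.cons h₄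
                    (Walk.cons h₅ p₅))))).support → x ≠ c₀ → x ≠ r := by
                intro x hx hxc
                rcases hbase with h | h
                · intro hh; exact h (hh ▸ hx)
                · exact h ▸ hxc
              have hN1 : G.neighborSet x₁ = {c₀, x₂} :=
                hpair x₁ c₀ x₂ (hsupU x₁ (by simp)) (hner x₁ (by simp) h10) h₁.symm h₂
                  (Ne.symm h20)
              have hN2 : G.neighborSet x₂ = {x₃, x₁} :=
                hpair x₂ x₃ x₁ (hsupU x₂ (by simp)) (hner x₂ (by simp) h20) h₃ h₂.symm
                  (Ne.symm h13)
              have hN3 : G.neighborSet x₃ = {x₂, x₄} :=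
                hpair x₃ x₂ x₄ (hsupU x₃ (by simp)) (hner x₃ (by simp) h30) h₃.symm h₄ h24
              refine Or.inr (Or.inr ⟨x₂, x₃, x₁, x₄, hGadj h₃, hN2, hN3, h13,
                fun hh => h24 hh.symm, h14, ?_⟩)
              exact hnadj x₁ c₀ x₂ x₄ hN1 h40 (fun hh => h24 hh.symm)

/-- The main structural induction: under the separator conditions coming from a
2-RVD-coloring, absence of all three "forms" is contradictory. -/
lemma IND [Fintype V] {G : SimpleGraph V}
    (hstar : ∀ x y : V, G.Adj x y → ∃ S : Set V, S.ncard ≤ 1 ∧ x ∉ S ∧ y ∉ S ∧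
        ¬ ((G.deleteEdges {s(x, y)}).delVerts S).Reachable x y)
    (hstar2 : ∀ x y : V, x ≠ y → ¬ G.Adj x y → ∃ S : Set V, S.ncard ≤ 2 ∧ x ∉ S ∧ y ∉ S ∧
        ¬ (G.delVerts S).Reachable x y)
    (hF1 : ¬ Form1 G) (hF2 : ¬ Form2 G) (hF3 : ¬ Form3 G) :
    ∀ (n : ℕ) (U : Set V) (r : V), U.ncard ≤ n → 2 ≤ U.ncard →
      (∀ x ∈ U, ∀ y ∈ U, (G.delVerts Uᶜ).Reachable x y) →
      (∀ u ∈ U, u ≠ r → G.neighborSet u ⊆ U) →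
      (∀ u ∈ U, u ≠ r → 2 ≤ (G.neighborSet u).ncard) → False := by
  classical
  intro n
  induction n with
  | zero =>
      intro U r h0 h2 _ _ _
      omega
  | succ n ih =>
      intro U r hle hU2 hconn hclosed hdeg
      -- small case: |U| = 2 is impossible
      by_cases hU3 : 3 ≤ U.ncard
      swap
      · -- pick u ∈ U, u ≠ r
        have h2' : 1 < U.ncard := hU2
        rw [Set.one_lt_ncard_iff (Set.toFinite U)] at h2'
        obtain ⟨u, v, hu, hv, huv⟩ := h2'
        have hkey : ∀ w ∈ U, w ≠ r → False := by
          intro w hw hwr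
          have h3 : G.neighborSet w ⊆ U \ {w} := by
            intro z hz
            refine ⟨hclosed w hw hwr hz, ?_⟩
            intro hzw
            rw [Set.mem_singleton_iff] at hzw
            subst hzw
            exact G.loopless.irrefl _ hz
          have h4 := Set.ncard_le_ncard h3 (Set.toFinite _)
          rw [Set.ncard_diff_singleton_of_mem hw] at h4
          have := hdeg w hw hwr
          omega
        by_cases hur : u = r
        · exact hkey v hv (fun h => huv (hur.trans h.symm))
        · exact hkey u hu hur
      -- main dichotomy: cut vertex or not
      by_cases hcut : ∃ c ∈ U, ∃ x ∈ U \ {c}, ∃ y ∈ U \ {c},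
          ¬ (G.delVerts (U \ {c})ᶜ).Reachable x y
      · obtain ⟨c, hc, x, hx, y, hy, hnr⟩ := hcut
        -- the reachability class of z inside U \ {c}
        have main : ∀ z y' : V, z ∈ U \ {c} → y' ∈ U \ {c} →
            ¬ (G.delVerts (U \ {c})ᶜ).Reachable z y' →
            r ∉ {v | v ∈ U \ {c} ∧ (G.delVerts (U \ {c})ᶜ).Reachable z v} → False := by
          intro z y' hz hy' hnr' hrD
          set K := U \ {c} with hK
          set D := {v | v ∈ K ∧ (G.delVerts Kᶜ).Reachable z v} with hD
          have hDsubK : D ⊆ K := fun v hv => hv.1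
          have hzD : z ∈ D := ⟨hz, Reachable.refl z⟩
          have hyD : y' ∉ D := fun h => hnr' h.2
          have hclos : ∀ p ∈ D, ∀ q, (G.delVerts Uᶜ).Adj p q → q ≠ c → q ∈ D := by
            intro p hp q hadj hqc
            have hqU : q ∈ U := (hu_adj.1 hadj).2.2
            have hqK : q ∈ K := ⟨hqU, hqc⟩
            have : (G.delVerts Kᶜ).Adj p q := by
              rw [hu_adj]
              exact ⟨(hu_adj.1 hadj).1, hp.1, hqK⟩
            exact ⟨hqK, hp.2.trans this.reachable⟩
          -- find an edge from D to c
          have hedge : ∃ d ∈ D, G.Adj d c := by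
            obtain ⟨W⟩ := hconn z (hz.1) y' (hy'.1)
            clear hnr hnr'
            have : ∀ {p q : V} (W : (G.delVerts Uᶜ).Walk p q), p ∈ D → q ∉ D →
                ∃ d ∈ D, G.Adj d c := by
              intro p q W
              induction W with
              | nil => intro h1 h2; exact absurd h1 h2
              | @cons a b w hadj p' ih' =>
                  intro h1 h2
                  by_cases hb : b ∈ D
                  · exact ih' hb h2
                  · refine ⟨a, h1, ?_⟩
                    have hbc : b = c := by
                      by_contra hbc
                      exact hb (hclos a h1 b hadj hbc)
                    rw [← hbc]
                    exact (hu_adj.1 hadj).1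
            exact this W hzD hyD
          obtain ⟨d, hd, hdc⟩ := hedge
          -- recurse on D ∪ {c}
          set U' := D ∪ {c} with hU'
          have hU'subU : U' ⊆ U := by
            intro v hv
            rcases hv with hv | rfl
            · exact (hDsubK hv).1
            · exact hc
          have hyU' : y' ∉ U' := by
            intro h
            rcases h with h | h
            · exact hyD h
            · exact hy'.2 h
          have hssub : U' ⊂ U := ⟨hU'subU, fun h => hyU' (h hy'.1)⟩
          have hlt : U'.ncard < U.ncard := Set.ncard_lt_ncard hssub (Set.toFinite U)
          -- reach facts within U'
          have hreach : ∀ v ∈ D, (G.delVerts U'ᶜ).Reachable z v := by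
            intro v hv
            obtain ⟨W⟩ := hv.2
            have hsup : ∀ x ∈ W.support, x ∈ D := by
              intro x hxW
              have h1 : (G.delVerts Kᶜ).Reachable z x := ⟨W.takeUntil x hxW⟩
              have h2 : x ∈ K := by
                rcases delVerts_walk_support W x hxW with rfl | h2
                · exact hv.1
                · simpa using h2
              exact ⟨h2, h1⟩
            obtain ⟨Q, hQ⟩ := delVerts_walk_mono (B := U'ᶜ) W
              (fun x hxW => by simp; exact Or.inl (hsup x hxW))
            exact ⟨Q⟩
          have hreachc : (G.delVerts U'ᶜ).Reachable z c := by
            refine (hreach d hd).trans (Adj.reachable ?_)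
            rw [hu_adj]
            exact ⟨hdc, Or.inl hd, Or.inr rfl⟩
          have hconn' : ∀ p ∈ U', ∀ q ∈ U', (G.delVerts U'ᶜ).Reachable p q := by
            have haux : ∀ p ∈ U', (G.delVerts U'ᶜ).Reachable z p := by
              intro p hp
              rcases hp with hp | rfl
              · exact hreach p hp
              · exact hreachc
            intro p hp q hq
            exact (haux p hp).symm.trans (haux q hq)
          have hclosed' : ∀ u ∈ U', u ≠ c → G.neighborSet u ⊆ U' := by
            intro u hu huc w hw
            have huD : u ∈ D := by
              rcases hu with h | h
              · exact h
              · exact absurd h huc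
            have hur : u ≠ r := by
              rintro rfl
              exact hrD huD
            have hwU : w ∈ U := hclosed u (hDsubK huD).1 hur hw
            have hadj : (G.delVerts Uᶜ).Adj u w := by
              rw [hu_adj]
              exact ⟨hw, (hDsubK huD).1, hwU⟩
            by_cases hwc : w = c
            · exact Or.inr hwc
            · exact Or.inl (hclos u huD w hadj hwc)
          have hdeg' : ∀ u ∈ U', u ≠ c → 2 ≤ (G.neighborSet u).ncard := by
            intro u hu huc
            have huD : u ∈ D := by
              rcases hu with h | h
              · exact h
              · exact absurd h huc
            have hur : u ≠ r := by
              rintro rfl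
              exact hrD huD
            exact hdeg u (hDsubK huD).1 hur
          have hU'2 : 2 ≤ U'.ncard := by
            have : ({z, c} : Set V) ⊆ U' := by
              intro v hv
              rcases hv with rfl | rfl
              · exact Or.inl hzD
              · exact Or.inr rfl
            have h4 := Set.ncard_le_ncard this (Set.toFinite U')
            rwa [Set.ncard_pair (by intro h; exact hz.2 (h ▸ rfl))] at h4
          exact ih U' c (by omega) hU'2 hconn' hclosed' hdeg'
        -- apply `main` to whichever of x,y avoids r
        by_cases hrx : r ∈ {v | v ∈ U \ {c} ∧ (G.delVerts (U \ {c})ᶜ).Reachable x v}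
        · refine main y x hy hx (fun h => hnr (h.symm)) ?_
          intro hry
          exact hnr (hrx.2.trans hry.2.symm)
        · exact main x y hx hy hnr hrx
      · -- no cut vertex: base case
        push_neg at hcut
        -- neighborhoods in the restricted graph
        have hNH : ∀ u ∈ U, u ≠ r → (G.delVerts Uᶜ).neighborSet u = G.neighborSet u := by
          intro u huU hur
          ext z
          constructor
          · intro hz
            exact hz.1
          · intro hz
            exact hu_adj.2 ⟨hz, huU, hclosed u huU hur hz⟩
        have hdegH : ∀ u ∈ U, 2 ≤ ((G.delVerts Uᶜ).neighborSet u).ncard := by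
          intro u huU
          by_cases hur : u = r
          · subst hur
            by_contra hlow
            push_neg at hlow
            rcases Set.eq_empty_or_nonempty ((G.delVerts Uᶜ).neighborSet u) with hemp | hne
            · obtain ⟨a, b, ha, hb, hab⟩ := (Set.one_lt_ncard_iff (Set.toFinite U)).1 hU2
              have hy : ∃ y ∈ U, y ≠ u := by
                by_cases h : a = u
                · exact ⟨b, hb, fun hh => hab (h.symm ▸ hh ▸ rfl)⟩
                · exact ⟨a, ha, h⟩
              obtain ⟨y, hyU, hyu⟩ := hy
              obtain ⟨W⟩ := hconn u huU y hyU
              cases W with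
              | nil => exact hyu rfl
              | @cons _ b _ hadj p =>
                  have hb' : b ∈ (G.delVerts Uᶜ).neighborSet u := hadj
                  rw [hemp] at hb'
                  exact hb'
            · obtain ⟨q, hq⟩ := hne
              have hsingle : ∀ z ∈ (G.delVerts Uᶜ).neighborSet u, z = q := by
                intro z hz
                by_contra hzq
                have hp : ({z, q} : Set V) ⊆ (G.delVerts Uᶜ).neighborSet u := by
                  intro t ht
                  rcases ht with rfl | rfl
                  · exact hz
                  · exact hq
                have h1 := Set.ncard_le_ncard hp (Set.toFinite _)
                rw [Set.ncard_pair hzq] at h1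
                omega
              have hqadj : (G.delVerts Uᶜ).Adj u q := hq
              have hqU : q ∈ U := (hu_adj.1 hqadj).2.2
              have hqu : q ≠ u := hqadj.ne'
              have hy : ∃ y ∈ U, y ≠ u ∧ y ≠ q := by
                by_contra h
                push_neg at h
                have hsub : U ⊆ {u, q} := by
                  intro t htU
                  by_cases h1 : t = u
                  · exact Or.inl h1
                  · exact Or.inr (h t htU h1)
                have h2 := Set.ncard_le_ncard hsub (Set.toFinite _)
                have h3 : ({u, q} : Set V).ncard ≤ 2 :=
                  le_trans (Set.ncard_insert_le _ _) (by simp)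
                omega
              obtain ⟨y, hyU, hyu, hyq⟩ := hy
              have hR := hcut q hqU u ⟨huU, fun hh => hqu (Set.mem_singleton_iff.1 hh).symm⟩
                y ⟨hyU, fun hh => hyq (Set.mem_singleton_iff.1 hh)⟩
              obtain ⟨W⟩ := hR
              cases W with
              | nil => exact hyu rfl
              | @cons _ b _ hadj p =>
                  have hbK : b ∈ U \ {q} := by
                    have h1 := hadj.2.2
                    simpa using h1
                  have hbq : b = q := by
                    refine hsingle b ?_
                    exact hu_adj.2 ⟨hadj.1, huU, hbK.1⟩
                  exact hbK.2 (by simp [hbq])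
          · rw [hNH u huU hur]
            exact hdeg u huU hur
        -- a cycle in the restricted graph
        have hUne : U.Nonempty := by
          rcases Set.eq_empty_or_nonempty U with h | h
          · rw [h, Set.ncard_empty] at hU2; omega
          · exact h
        obtain ⟨u₀', hu₀'⟩ := hUne
        have hNne : ((G.delVerts Uᶜ).neighborSet u₀').Nonempty := by
          rcases Set.eq_empty_or_nonempty ((G.delVerts Uᶜ).neighborSet u₀') with h | h
          · have := hdegH u₀' hu₀'
            rw [h, Set.ncard_empty] at this
            omega
          · exact h
        obtain ⟨w₀, hw₀⟩ := hNne
        obtain ⟨c, C, hC⟩ := cycex (fun a b hab => hdegH b (hu_adj.1 hab).2.2) hw₀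
        have hsupU : ∀ {d : V} (W : (G.delVerts Uᶜ).Walk d d), W.IsCycle →
            ∀ x ∈ W.support, x ∈ U := by
          intro d W hW x hx
          have hd : d ∈ U := by
            have hnn : ¬ W.Nil := hW.not_nil
            have hadj := Walk.adj_snd hnn
            exact (hu_adj.1 hadj).2.1
          rcases delVerts_walk_support W x hx with rfl | h
          · exact hd
          · simpa using h
        obtain ⟨c₀, C₀, hC₀, hbase⟩ : ∃ (c₀ : V) (C₀ : (G.delVerts Uᶜ).Walk c₀ c₀),
            C₀.IsCycle ∧ (r ∉ C₀.support ∨ c₀ = r) := by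
          by_cases hrC : r ∈ C.support
          · exact ⟨r, C.rotate r hrC, hC.rotate hrC, Or.inr rfl⟩
          · exact ⟨c, C, hC, Or.inl hrC⟩
        have hC₀supU : ∀ x ∈ C₀.support, x ∈ U := hsupU C₀ hC₀
        by_cases hout : ∀ x ∈ U, x ∈ C₀.support
        · by_cases hbig : ∃ u₀ ∈ U, 3 ≤ ((G.delVerts Uᶜ).neighborSet u₀).ncard
          · -- a chord: contradiction with the separator property
            obtain ⟨u₀, hu₀U, hu₀3⟩ := hbig
            have hu₀C : u₀ ∈ C₀.support := hout u₀ hu₀U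
            set C₂ := C₀.rotate u₀ hu₀C with hC₂def
            have hC₂ : C₂.IsCycle := hC₀.rotate hu₀C
            have hC₂mem : ∀ {x : V}, x ∈ C₂.support ↔ x ∈ C₀.support :=
              fun {x} => mem_support_rotate C₀ hC₀ hu₀C
            have hlen3 : 3 ≤ C₂.length := hC₂.three_le_length
            set x₁ := C₂.getVert 1 with hx₁def
            set xl := C₂.getVert (C₂.length - 1) with hxldef
            have hq : ∃ q, (G.delVerts Uᶜ).Adj u₀ q ∧ q ∉ ({x₁, xl} : Set V) := by
              by_contra h
              push_neg at h
              have hsub : (G.delVerts Uᶜ).neighborSet u₀ ⊆ {x₁, xl} := fun z hz => h z hz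
              have h1 := Set.ncard_le_ncard hsub (Set.toFinite _)
              have h2 : ({x₁, xl} : Set V).ncard ≤ 2 :=
                le_trans (Set.ncard_insert_le _ _) (by simp)
              omega
            obtain ⟨q, hadjq, hqnot⟩ := hq
            have hqU : q ∈ U := (hu_adj.1 hadjq).2.2
            have hqC : q ∈ C₂.support := hC₂mem.2 (hout q hqU)
            have hqu₀ : q ≠ u₀ := hadjq.ne'
            obtain ⟨hTpath, hDpath, hcom, hlensum⟩ := cycle_split C₂ hC₂ hqC hqu₀
            set T := C₂.takeUntil q hqC with hTdef
            set D := C₂.dropUntil q hqC with hDdef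
            have hTne0 : T.length ≠ 0 := fun h => hadjq.ne (T.eq_of_length_eq_zero h)
            have hDne0 : D.length ≠ 0 := fun h => hadjq.ne' (D.eq_of_length_eq_zero h)
            have hspec := C₂.take_spec hqC
            have hTne1 : T.length ≠ 1 := by
              intro h1
              have hx1q : x₁ = q := by
                rw [hx₁def]
                have h3 : C₂.getVert 1 = (T.append D).getVert 1 := by rw [hspec]
                rw [h3, Walk.getVert_append, if_neg (by omega)]
                have h2 : 1 - T.length = 0 := by omega
                rw [h2, Walk.getVert_zero]
              exact hqnot (Set.mem_insert_iff.2 (Or.inl hx1q.symm))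
            have hC₂len : C₂.length = T.length + D.length := hlensum.symm
            have hDne1 : D.length ≠ 1 := by
              intro h1
              have hxlq : xl = q := by
                rw [hxldef]
                have h3 : C₂.getVert (C₂.length - 1) =
                    (T.append D).getVert (C₂.length - 1) := by rw [hspec]
                rw [h3, Walk.getVert_append, if_neg (by omega)]
                have h2 : C₂.length - 1 - T.length = 0 := by omega
                rw [h2, Walk.getVert_zero]
              refine hqnot (Set.mem_insert_iff.2 (Or.inr ?_))
              exact Set.mem_singleton_iff.2 hxlq.symm
            have hadjG : G.Adj u₀ q := hadjq.1
            obtain ⟨S, hS1, hSu, hSq, hsep⟩ := hstar u₀ q hadjG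
            refine kill2 (fun a b (h : (G.delVerts Uᶜ).Adj a b) => h.1) hS1 hSu hSq hsep T D.reverse ?_ ?_ ?_
            · intro h
              have := path_edge_mem T hTpath h
              omega
            · intro h
              have h2 := path_edge_mem D.reverse hDpath.reverse h
              rw [Walk.length_reverse] at h2
              omega
            · intro t h1 h2
              refine hcom t h1 ?_
              rwa [Walk.support_reverse, List.mem_reverse] at h2
          · -- all degrees ≤ 2 : extract a form, contradiction
            push_neg at hbig
            have hdegle : ∀ u ∈ U, ((G.delVerts Uᶜ).neighborSet u).ncard ≤ 2 := by
              intro u hu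
              have := hbig u hu
              omega
            rcases formfind hNH hdegle C₀ hC₀ hbase hC₀supU with h | h | h
            · exact hF1 h
            · exact hF2 h
            · exact hF3 h
        · -- a vertex outside the cycle: build a third path, contradiction
          push_neg at hout
          obtain ⟨x', hx'U, hx'C⟩ := hout
          set CS := {x : V | x ∈ C₀.support} with hCSdef
          have hexit : ∃ c₁ ∈ CS, ∃ w, w ∉ CS ∧ (G.delVerts Uᶜ).Adj c₁ w := by
            obtain ⟨W⟩ := hconn c₀ (hC₀supU c₀ C₀.start_mem_support) x' hx'U
            exact first_exit W C₀.start_mem_support hx'C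
          obtain ⟨c₁, hc₁CS, w, hwCS, hadj₁⟩ := hexit
          have hc₁U : c₁ ∈ U := (hu_adj.1 hadj₁).2.1
          have hwU : w ∈ U := (hu_adj.1 hadj₁).2.2
          have hc₁s : c₁ ∈ C₀.support := hc₁CS
          set C₁ := C₀.rotate c₁ hc₁s with hC₁def
          have hC₁ : C₁.IsCycle := hC₀.rotate hc₁s
          have hC₁mem : ∀ {x : V}, x ∈ C₁.support ↔ x ∈ C₀.support :=
            fun {x} => mem_support_rotate C₀ hC₀ hc₁s
          have hnn : ¬ C₁.Nil := hC₁.not_nil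
          have hadjx₁ : (G.delVerts Uᶜ).Adj c₁ (C₁.getVert 1) := Walk.adj_snd hnn
          set x₁ := C₁.getVert 1 with hx₁def
          have hx₁U : x₁ ∈ U := (hu_adj.1 hadjx₁).2.2
          have hx₁c₁ : x₁ ≠ c₁ := hadjx₁.ne'
          have hwc₁ : w ≠ c₁ := fun h => hwCS (h ▸ hc₁CS)
          have hrwx : (G.delVerts (U \ {c₁})ᶜ).Reachable w x₁ :=
            hcut c₁ hc₁U w ⟨hwU, fun hh => hwc₁ (Set.mem_singleton_iff.1 hh)⟩
              x₁ ⟨hx₁U, fun hh => hx₁c₁ (Set.mem_singleton_iff.1 hh)⟩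
          obtain ⟨W₁⟩ := hrwx
          have hW₁sup : ∀ x ∈ W₁.support, x ∈ U \ {c₁} := by
            intro x hx
            rcases delVerts_walk_support W₁ x hx with rfl | h
            · exact ⟨hx₁U, fun hh => hx₁c₁ (Set.mem_singleton_iff.1 hh)⟩
            · simpa using h
          obtain ⟨P, hPsup⟩ := delVerts_walk_mono (B := Uᶜ) W₁
            (fun x hx => by simpa using (hW₁sup x hx).1)
          have hPavoid : ∀ x ∈ P.support, x ≠ c₁ := by
            intro x hx
            rw [hPsup] at hx
            exact fun hh => (hW₁sup x hx).2 (Set.mem_singleton_iff.2 hh)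
          have hx₁CS : x₁ ∈ CS := by
            refine hC₁mem.1 ?_
            rw [Walk.mem_support_iff_exists_getVert]
            refine ⟨1, rfl, ?_⟩
            have : 0 < C₁.length := by
              have := hC₁.three_le_length
              omega
            omega
          obtain ⟨c₂, hc₂CS, R, hR1, hR2⟩ := first_hit P hwCS hx₁CS
          set R₂ := R.bypass with hR₂def
          have hR₂path : R₂.IsPath := R.bypass_isPath
          have hR₂sub : ∀ x ∈ R₂.support, x ∈ R.support :=
            fun x hx => R.support_bypass_subset hx
          have hR₂prop : ∀ x ∈ R₂.support, x = c₂ ∨ x ∉ CS :=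
            fun x hx => hR1 x (hR₂sub x hx)
          have hR₂avoid : ∀ x ∈ R₂.support, x ≠ c₁ :=
            fun x hx => hPavoid x (hR2 x (hR₂sub x hx))
          have hwc₂ : w ≠ c₂ := fun h => hwCS (h ▸ hc₂CS)
          have hR₂len : 1 ≤ R₂.length := by
            by_contra h
            push_neg at h
            exact hwc₂ (R₂.eq_of_length_eq_zero (by omega))
          have hc₂c₁ : c₂ ≠ c₁ := hR₂avoid c₂ R₂.end_mem_support
          set R₃ := Walk.cons hadj₁ R₂ with hR₃def
          have hR₃path : R₃.IsPath := by
            rw [hR₃def, Walk.cons_isPath_iff]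
            exact ⟨hR₂path, fun h => hR₂avoid c₁ h rfl⟩
          have hR₃len : 2 ≤ R₃.length := by
            rw [hR₃def, Walk.length_cons]
            omega
          have hR₃prop : ∀ x ∈ R₃.support, x = c₁ ∨ x = c₂ ∨ x ∉ CS := by
            intro x hx
            rw [hR₃def, Walk.support_cons, List.mem_cons] at hx
            rcases hx with rfl | hx
            · exact Or.inl rfl
            · rcases hR₂prop x hx with h | h
              · exact Or.inr (Or.inl h)
              · exact Or.inr (Or.inr h)
          have hmem₂ : c₂ ∈ C₁.support := hC₁mem.2 hc₂CS
          obtain ⟨hTpath, hDpath, hcom, hlensum⟩ := cycle_split C₁ hC₁ hmem₂ hc₂c₁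
          set T := C₁.takeUntil c₂ hmem₂ with hTdef
          set D := C₁.dropUntil c₂ hmem₂ with hDdef
          have hTsub : ∀ x ∈ T.support, x ∈ CS :=
            fun x hx => hC₁mem.1 (Walk.support_takeUntil_subset C₁ hmem₂ hx)
          have hDsub : ∀ x ∈ D.support, x ∈ CS :=
            fun x hx => hC₁mem.1 (Walk.support_dropUntil_subset C₁ hmem₂ hx)
          have hTlen1 : 1 ≤ T.length := by
            by_contra h
            push_neg at h
            exact hc₂c₁ ((T.eq_of_length_eq_zero (by omega)).symm)
          have hsum3 : 3 ≤ T.length + D.length := by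
            rw [hlensum]
            exact hC₁.three_le_length
          have hTR : ∀ t, t ∈ T.support → t ∈ R₃.support → t = c₁ ∨ t = c₂ := by
            intro t h1 h2
            rcases hR₃prop t h2 with h | h | h
            · exact Or.inl h
            · exact Or.inr h
            · exact absurd (hTsub t h1) h
          have hDR : ∀ t, t ∈ D.reverse.support → t ∈ R₃.support → t = c₁ ∨ t = c₂ := by
            intro t h1 h2
            rw [Walk.support_reverse, List.mem_reverse] at h1
            rcases hR₃prop t h2 with h | h | h
            · exact Or.inl h
            · exact Or.inr h
            · exact absurd (hDsub t h1) h
          have hTD : ∀ t, t ∈ T.support → t ∈ D.reverse.support → t = c₁ ∨ t = c₂ := by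
            intro t h1 h2
            rw [Walk.support_reverse, List.mem_reverse] at h2
            exact hcom t h1 h2
          have hR₃edge : s(c₁, c₂) ∉ R₃.edges := by
            intro h
            have := path_edge_mem R₃ hR₃path h
            omega
          by_cases hadjG : G.Adj c₁ c₂
          · obtain ⟨S, hS1, hSc₁, hSc₂, hsep⟩ := hstar c₁ c₂ hadjG
            by_cases hT2 : 2 ≤ T.length
            · refine kill2 (fun a b (h : (G.delVerts Uᶜ).Adj a b) => h.1) hS1 hSc₁ hSc₂ hsep T R₃ ?_ hR₃edge hTR
              intro h
              have := path_edge_mem T hTpath h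
              omega
            · have hD2 : 2 ≤ D.reverse.length := by
                rw [Walk.length_reverse]
                omega
              refine kill2 (fun a b (h : (G.delVerts Uᶜ).Adj a b) => h.1) hS1 hSc₁ hSc₂ hsep D.reverse R₃ ?_ hR₃edge hDR
              intro h
              have h2 := path_edge_mem D.reverse hDpath.reverse h
              omega
          · obtain ⟨S, hS2, hSc₁, hSc₂, hsep⟩ := hstar2 c₁ c₂ (Ne.symm hc₂c₁) hadjG
            exact kill3 (fun a b (h : (G.delVerts Uᶜ).Adj a b) => h.1) hS2 hSc₁ hSc₂ hsep T D.reverse R₃ hTD hTR hDR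


lemma pair_ncard_le {x y : V} : ({x, y} : Set V).ncard ≤ 2 :=
  le_trans (Set.ncard_insert_le _ _) (by simp)

lemma triple_ncard_le {x y z : V} : ({x, y, z} : Set V).ncard ≤ 3 := by
  refine le_trans (Set.ncard_insert_le _ _) ?_
  have := pair_ncard_le (x := y) (y := z) (V := V)
  omega

lemma univ_ncard [Fintype V] : (Set.univ : Set V).ncard = Fintype.card V := by
  rw [Set.ncard_univ, Nat.card_eq_fintype_card]

lemma form1_bound [Fintype V] {G : SimpleGraph V} (h : Form1 G) {k : ℕ} {c : V → Fin k}
    (hc : Gᶜ.IsRVDColoring c) : Fintype.card V - 3 ≤ k := by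
  classical
  obtain ⟨x, y, hne, hnadj, hW⟩ := h
  have hadj' : Gᶜ.Adj x y := ⟨hne, hnadj⟩
  obtain ⟨S, hxS, hyS, -, hB⟩ := hc x y hne
  obtain ⟨hsep, hinj⟩ := hB hadj'
  have hcov : (Set.univ : Set V) ⊆ S ∪ {x, y} ∪
      ((G.neighborSet x ∪ G.neighborSet y) \ {x, y}) := by
    intro w _
    by_contra hw
    simp only [Set.mem_union, not_or] at hw
    obtain ⟨⟨hwS, hwxy⟩, hwW⟩ := hw
    have hwx : w ≠ x := fun h => hwxy (by simp [h])
    have hwy : w ≠ y := fun h => hwxy (by simp [h])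
    have hwN : w ∉ G.neighborSet x ∪ G.neighborSet y := fun h => hwW ⟨h, hwxy⟩
    simp only [Set.mem_union, not_or] at hwN
    obtain ⟨hwNx, hwNy⟩ := hwN
    have hexw : s(x, w) ∉ ({s(x, y)} : Set (Sym2 V)) := by
      intro hmem
      rw [Set.mem_singleton_iff, Sym2.eq_iff] at hmem
      rcases hmem with ⟨-, h⟩ | ⟨h1, -⟩
      · exact hwy h
      · exact hne h1
    have heyw : s(w, y) ∉ ({s(x, y)} : Set (Sym2 V)) := by
      intro hmem
      rw [Set.mem_singleton_iff, Sym2.eq_iff] at hmem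
      rcases hmem with ⟨h, -⟩ | ⟨-, h⟩
      · exact hwx h
      · exact hne h.symm
    have A1 : ((Gᶜ.deleteEdges {s(x, y)}).delVerts S).Adj x w :=
      ⟨(deleteEdges_adj).2 ⟨⟨Ne.symm hwx, fun hh => hwNx hh⟩, hexw⟩, hxS, hwS⟩
    have A2 : ((Gᶜ.deleteEdges {s(x, y)}).delVerts S).Adj w y :=
      ⟨(deleteEdges_adj).2 ⟨⟨hwy, fun hh => hwNy hh.symm⟩, heyw⟩, hwS, hyS⟩
    exact hsep (A1.reachable.trans A2.reachable)
  have e1 := univ_ncard (V := V)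
  have e2 := Set.ncard_le_ncard hcov (Set.toFinite _)
  have e3 := Set.ncard_union_le (S ∪ ({x, y} : Set V))
    ((G.neighborSet x ∪ G.neighborSet y) \ {x, y})
  have e4 := Set.ncard_union_le S ({x, y} : Set V)
  have e5 := pair_ncard_le (x := x) (y := y) (V := V)
  rcases hinj with hinj | hinj
  · have h2 := injOn_ncard hinj
    have h3 : (S ∪ {x}).ncard = S.ncard + 1 := by
      rw [Set.union_singleton, Set.ncard_insert_of_notMem hxS (Set.toFinite S)]
    omega
  · have h2 := injOn_ncard hinj
    have h3 : (S ∪ {y}).ncard = S.ncard + 1 := by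
      rw [Set.union_singleton, Set.ncard_insert_of_notMem hyS (Set.toFinite S)]
    omega

lemma form2_bound [Fintype V] {G : SimpleGraph V} (h : Form2 G) {k : ℕ} {c : V → Fin k}
    (hc : Gᶜ.IsRVDColoring c) : Fintype.card V - 3 ≤ k := by
  classical
  obtain ⟨x, y, v, hadj, hNx, hNy⟩ := h
  have hne : x ≠ y := hadj.ne
  obtain ⟨S, hxS, hyS, hB, -⟩ := hc x y hne
  have hnadj' : ¬ Gᶜ.Adj x y := fun hh => hh.2 hadj
  obtain ⟨hsep, hinj⟩ := hB hnadj'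
  have hcov : (Set.univ : Set V) ⊆ S ∪ {x, y, v} := by
    intro w _
    by_contra hw
    simp only [Set.mem_union, not_or] at hw
    obtain ⟨hwS, hwxyv⟩ := hw
    have hwx : w ≠ x := fun h => hwxyv (by simp [h])
    have hwy : w ≠ y := fun h => hwxyv (by simp [h])
    have hwv : w ≠ v := fun h => hwxyv (by simp [h])
    have hwNx : ¬ G.Adj x w := by
      intro hh
      have : w ∈ G.neighborSet x := hh
      rw [hNx] at this
      rcases this with h | h
      · exact hwy h
      · exact hwv h
    have hwNy : ¬ G.Adj y w := by
      intro hh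
      have : w ∈ G.neighborSet y := hh
      rw [hNy] at this
      rcases this with h | h
      · exact hwx h
      · exact hwv h
    have A1 : (Gᶜ.delVerts S).Adj x w := ⟨⟨Ne.symm hwx, hwNx⟩, hxS, hwS⟩
    have A2 : (Gᶜ.delVerts S).Adj w y := ⟨⟨hwy, fun hh => hwNy hh.symm⟩, hwS, hyS⟩
    exact hsep (A1.reachable.trans A2.reachable)
  have e1 := univ_ncard (V := V)
  have e2 := Set.ncard_le_ncard hcov (Set.toFinite _)
  have e3 := Set.ncard_union_le S ({x, y, v} : Set V)
  have e4 := triple_ncard_le (x := x) (y := y) (z := v) (V := V)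
  have h2 := injOn_ncard hinj
  omega

lemma form3_bound [Fintype V] {G : SimpleGraph V} (h : Form3 G) {k : ℕ} {c : V → Fin k}
    (hc : Gᶜ.IsRVDColoring c) : Fintype.card V - 3 ≤ k := by
  classical
  obtain ⟨x, y, a, b, hadj, hNx, hNy, hay, hbx, hab, hnab⟩ := h
  have hne : x ≠ y := hadj.ne
  have hGxa : G.Adj x a := by
    have : a ∈ G.neighborSet x := by rw [hNx]; simp
    exact this
  have hGyb : G.Adj y b := by
    have : b ∈ G.neighborSet y := by rw [hNy]; simp
    exact this
  have hby : b ≠ y := hGyb.ne'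
  have hax : a ≠ x := hGxa.ne'
  obtain ⟨S, hxS, hyS, hB, -⟩ := hc x y hne
  have hnadj' : ¬ Gᶜ.Adj x y := fun hh => hh.2 hadj
  obtain ⟨hsep, hinj⟩ := hB hnadj'
  have hor : a ∈ S ∨ b ∈ S := by
    by_contra hcon
    push_neg at hcon
    obtain ⟨haS, hbS⟩ := hcon
    have A1 : (Gᶜ.delVerts S).Adj x b := by
      refine ⟨⟨Ne.symm hbx, ?_⟩, hxS, hbS⟩
      intro hh
      have : b ∈ G.neighborSet x := hh
      rw [hNx] at this
      rcases this with h | h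
      · exact hby h
      · exact hab h.symm
    have A2 : (Gᶜ.delVerts S).Adj b a := by
      refine ⟨⟨Ne.symm hab, fun hh => hnab hh.symm⟩, hbS, haS⟩
    have A3 : (Gᶜ.delVerts S).Adj a y := by
      refine ⟨⟨hay, ?_⟩, haS, hyS⟩
      intro hh
      have : a ∈ G.neighborSet y := hh.symm
      rw [hNy] at this
      rcases this with h | h
      · exact hax h
      · exact hab h
    exact hsep ((A1.reachable.trans A2.reachable).trans A3.reachable)
  have hcovgen : ∀ z : V, (∀ w : V, w ∉ S → w ≠ x → w ≠ y → w ≠ z → False) →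
      (Set.univ : Set V) ⊆ S ∪ {x, y, z} := by
    intro z hkey w _
    by_contra hw
    simp only [Set.mem_union, not_or] at hw
    obtain ⟨hwS, hwxyz⟩ := hw
    exact hkey w hwS (fun h => hwxyz (by simp [h])) (fun h => hwxyz (by simp [h]))
      (fun h => hwxyz (by simp [h]))
  have hpath : ∀ w : V, w ∉ S → w ≠ x → w ≠ y → ¬ G.Adj x w → ¬ G.Adj y w → False := by
    intro w hwS hwx hwy hwNx hwNy
    have A1 : (Gᶜ.delVerts S).Adj x w := ⟨⟨Ne.symm hwx, hwNx⟩, hxS, hwS⟩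
    have A2 : (Gᶜ.delVerts S).Adj w y := ⟨⟨hwy, fun hh => hwNy hh.symm⟩, hwS, hyS⟩
    exact hsep (A1.reachable.trans A2.reachable)
  have hcov : ∃ z : V, (Set.univ : Set V) ⊆ S ∪ {x, y, z} := by
    rcases hor with haS | hbS
    · refine ⟨b, hcovgen b ?_⟩
      intro w hwS hwx hwy hwb
      refine hpath w hwS hwx hwy ?_ ?_
      · intro hh
        have : w ∈ G.neighborSet x := hh
        rw [hNx] at this
        rcases this with h | h
        · exact hwy h
        · exact hwS (h ▸ haS)
      · intro hh
        have : w ∈ G.neighborSet y := hh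
        rw [hNy] at this
        rcases this with h | h
        · exact hwx h
        · exact hwb h
    · refine ⟨a, hcovgen a ?_⟩
      intro w hwS hwx hwy hwa
      refine hpath w hwS hwx hwy ?_ ?_
      · intro hh
        have : w ∈ G.neighborSet x := hh
        rw [hNx] at this
        rcases this with h | h
        · exact hwy h
        · exact hwa h
      · intro hh
        have : w ∈ G.neighborSet y := hh
        rw [hNy] at this
        rcases this with h | h
        · exact hwx h
        · exact hwS (h ▸ hbS)
  obtain ⟨z, hcov⟩ := hcov
  have e1 := univ_ncard (V := V)
  have e2 := Set.ncard_le_ncard hcov (Set.toFinite _)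
  have e3 := Set.ncard_union_le S ({x, y, z} : Set V)
  have e4 := triple_ncard_le (x := x) (y := y) (z := z) (V := V)
  have h2 := injOn_ncard hinj
  omega

theorem rvd_compl_ge_of_rvd_eq_two' {V : Type*} [Fintype V] (G : SimpleGraph V)
    (hG : G.Connected) (hGc : Gᶜ.Connected) (h2 : G.rvd = 2) :
    Fintype.card V - 3 ≤ Gᶜ.rvd := by
  classical
  by_cases hsmall : Fintype.card V ≤ 3
  · have h0 : Fintype.card V - 3 = 0 := by omega
    rw [h0]
    exact Nat.zero_le _
  push_neg at hsmall
  have hne' : {k | ∃ c : V → Fin k, Gᶜ.IsRVDColoring c}.Nonempty := ⟨_, univ_coloring Gᶜ⟩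
  have hmem : Gᶜ.rvd ∈ {k | ∃ c : V → Fin k, Gᶜ.IsRVDColoring c} := Nat.sInf_mem hne'
  obtain ⟨c', hc'⟩ := hmem
  have hmem2 : (2 : ℕ) ∈ {k | ∃ c : V → Fin k, G.IsRVDColoring c} := by
    rw [show (2 : ℕ) = G.rvd from h2.symm]
    exact Nat.sInf_mem ⟨_, univ_coloring G⟩
  obtain ⟨c₂, hc₂⟩ := hmem2
  have hstar : ∀ x y : V, G.Adj x y → ∃ S : Set V, S.ncard ≤ 1 ∧ x ∉ S ∧ y ∉ S ∧
      ¬ ((G.deleteEdges {s(x, y)}).delVerts S).Reachable x y := by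
    intro x y hxy
    obtain ⟨S, hxS, hyS, -, hB⟩ := hc₂ x y hxy.ne
    obtain ⟨hsep, hinj⟩ := hB hxy
    refine ⟨S, ?_, hxS, hyS, hsep⟩
    rcases hinj with hinj | hinj
    · have hk := injOn_ncard hinj
      have h3 : (S ∪ {x}).ncard = S.ncard + 1 := by
        rw [Set.union_singleton, Set.ncard_insert_of_notMem hxS (Set.toFinite S)]
      omega
    · have hk := injOn_ncard hinj
      have h3 : (S ∪ {y}).ncard = S.ncard + 1 := by
        rw [Set.union_singleton, Set.ncard_insert_of_notMem hyS (Set.toFinite S)]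
      omega
  have hstar2 : ∀ x y : V, x ≠ y → ¬ G.Adj x y → ∃ S : Set V, S.ncard ≤ 2 ∧ x ∉ S ∧ y ∉ S ∧
      ¬ (G.delVerts S).Reachable x y := by
    intro x y hne hnadj
    obtain ⟨S, hxS, hyS, hB, -⟩ := hc₂ x y hne
    obtain ⟨hsep, hinj⟩ := hB hnadj
    exact ⟨S, injOn_ncard hinj, hxS, hyS, hsep⟩
  by_cases hF1 : Form1 G
  · exact form1_bound hF1 hc'
  by_cases hF2 : Form2 G
  · exact form2_bound hF2 hc'
  by_cases hF3 : Form3 G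
  · exact form3_bound hF3 hc'
  -- no forms: derive a contradiction via the structural induction
  exfalso
  have hnV : Nonempty V := hG.nonempty
  have hdel : G.delVerts (Set.univ : Set V)ᶜ = G := by
    have hcompl : (Set.univ : Set V)ᶜ = ∅ := by simp
    rw [hcompl]
    ext a b
    show G.Adj a b ∧ a ∉ (∅ : Set V) ∧ b ∉ (∅ : Set V) ↔ G.Adj a b
    simp
  -- find a root
  have hroot : ∃ r : V, ∀ u : V, u ≠ r → 2 ≤ (G.neighborSet u).ncard := by
    by_cases h : ∃ u : V, (G.neighborSet u).ncard ≤ 1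
    · obtain ⟨u, hu⟩ := h
      refine ⟨u, fun w hw => ?_⟩
      by_contra hlow
      push_neg at hlow
      have hw1 : (G.neighborSet w).ncard ≤ 1 := by omega
      -- two low-degree vertices u ≠ w
      by_cases hadj : G.Adj u w
      · -- then V = {u, w}, contradicting card ≥ 4
        have hNu : G.neighborSet u = {w} := by
          refine (Set.eq_of_subset_of_ncard_le ?_ ?_ (Set.toFinite _)).symm
          · intro t ht
            rw [Set.mem_singleton_iff] at ht
            exact ht ▸ hadj
          · rw [Set.ncard_singleton]
            exact hu
        have hNw : G.neighborSet w = {u} := by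
          refine (Set.eq_of_subset_of_ncard_le ?_ ?_ (Set.toFinite _)).symm
          · intro t ht
            rw [Set.mem_singleton_iff] at ht
            exact ht ▸ hadj.symm
          · rw [Set.ncard_singleton]
            exact hw1
        have hkey : ∀ {p q : V} (W : G.Walk p q), p ∈ ({u, w} : Set V) →
            q ∈ ({u, w} : Set V) := by
          intro p q W
          induction W with
          | nil => exact id
          | @cons a b d hadj' p' ih =>
              intro hp
              apply ih
              rcases hp with rfl | hp
              · have hbN : b ∈ G.neighborSet a := hadj'
                rw [hNu] at hbN
                exact Or.inr hbN
              · rw [Set.mem_singleton_iff] at hp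
                subst hp
                have hbN : b ∈ G.neighborSet a := hadj'
                rw [hNw] at hbN
                exact Or.inl hbN
        have hsub : (Set.univ : Set V) ⊆ {u, w} := by
          intro t _
          obtain ⟨W⟩ := hG.preconnected u t
          exact hkey W (Or.inl rfl)
        have e1 := univ_ncard (V := V)
        have e2 := Set.ncard_le_ncard hsub (Set.toFinite _)
        have e3 := pair_ncard_le (x := u) (y := w) (V := V)
        omega
      · -- Form1
        refine hF1 ⟨u, w, Ne.symm hw, hadj, ?_⟩
        have hs : (G.neighborSet u ∪ G.neighborSet w) \ {u, w} ⊆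
            G.neighborSet u ∪ G.neighborSet w := Set.diff_subset
        have e2 := Set.ncard_le_ncard hs (Set.toFinite _)
        have e3 := Set.ncard_union_le (G.neighborSet u) (G.neighborSet w)
        omega
    · push_neg at h
      obtain ⟨r0⟩ := hnV
      refine ⟨r0, fun z _ => ?_⟩
      have := h z
      omega
  obtain ⟨r, hr⟩ := hroot
  refine IND hstar hstar2 hF1 hF2 hF3 (Fintype.card V) Set.univ r ?_ ?_ ?_ ?_ ?_
  · rw [univ_ncard]
  · rw [univ_ncard]; omega
  · intro x _ y _
    rw [hdel]
    exact hG.preconnected x y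
  · intro u _ _
    exact Set.subset_univ _
  · intro u _ hur
    exact hr u hur


end RVDwork

/-- If `G` is a connected graph of order `n` with `rvd(G) = 2` and the
complement `Ḡ` is connected, then `rvd(Ḡ) ≥ n - 3`. -/
theorem rvd_compl_ge_of_rvd_eq_two {V : Type*} [Fintype V] (G : SimpleGraph V)
    (hG : G.Connected) (hGc : Gᶜ.Connected) (h2 : G.rvd = 2) :
    Fintype.card V - 3 ≤ Gᶜ.rvd :=
  RVDwork.rvd_compl_ge_of_rvd_eq_two' G hG hGc h2
end
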